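/- arXiv:2603.22659 — 8 statements merged into one kernel-verified Lean document; each statement's English description precedes it below -/
import Mathlib

section
/- Let 0 < σ̲ ≤ σ ≤ σ̄, let β > 0, a ∈ ℝ, and let Z be a real random variable with the Gaussian distribution N(0,σ²). Then E[exp(−β(a+Z)²/(2σ̄²))] ≤ (1+β)^{−ρ} · exp(−βa²/(2(1+β)σ̄²)), where ρ := σ̲²/(2σ̄²). (This is the classical-Gaussian specialization of the G-heat-equation estimate used in the proof of the main missed-detection theorem.) -/
open MeasureTheory ProbabilityTheory Real

lemma gauss_shift_integral (v c a : ℝ) (hv : 0 < v) (hc : 0 < c) :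
    ∫ x : ℝ, (Real.sqrt (2 * π * v))⁻¹ * Real.exp (-x ^ 2 / (2 * v))
        * Real.exp (-c * (a + x) ^ 2)
      = (1 + 2 * c * v) ^ (-(1 : ℝ) / 2) * Real.exp (-c * a ^ 2 / (1 + 2 * c * v)) := by
  have hden : (0 : ℝ) < 1 + 2 * c * v := by positivity
  set d : ℝ := 1 / (2 * v) + c with hd
  have hdpos : 0 < d := by positivity
  set m : ℝ := c * a / d with hm
  have key : ∀ x : ℝ,
      (Real.sqrt (2 * π * v))⁻¹ * Real.exp (-x ^ 2 / (2 * v)) * Real.exp (-c * (a + x) ^ 2)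
        = ((Real.sqrt (2 * π * v))⁻¹ * Real.exp (-c * a ^ 2 / (1 + 2 * c * v)))
          * Real.exp (-d * (x + m) ^ 2) := by
    intro x
    have hexp : -x ^ 2 / (2 * v) + -c * (a + x) ^ 2
        = -c * a ^ 2 / (1 + 2 * c * v) + -d * (x + m) ^ 2 := by
      rw [hm, hd]; field_simp; ring
    rw [mul_assoc, ← Real.exp_add, hexp, Real.exp_add, ← mul_assoc]
  rw [funext key, MeasureTheory.integral_const_mul]
  have hshift : ∫ x : ℝ, Real.exp (-d * (x + m) ^ 2)
      = ∫ x : ℝ, Real.exp (-d * x ^ 2) :=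
    integral_add_right_eq_self (fun x => Real.exp (-d * x ^ 2)) m
  rw [hshift, integral_gaussian]
  have hsq : Real.sqrt (π / d) * Real.sqrt (1 + 2 * c * v) = Real.sqrt (2 * π * v) := by
    rw [← Real.sqrt_mul (by positivity)]
    congr 1
    rw [hd]; field_simp
  have h1 : (1 + 2 * c * v) ^ (-(1 : ℝ) / 2) = (Real.sqrt (1 + 2 * c * v))⁻¹ := by
    rw [neg_div, Real.rpow_neg hden.le, ← Real.sqrt_eq_rpow]
  have hs1 : Real.sqrt (π / d) ≠ 0 := by positivity
  have hs2 : Real.sqrt (1 + 2 * c * v) ≠ 0 := by positivity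
  have h2 : (Real.sqrt (2 * π * v))⁻¹ * Real.sqrt (π / d)
      = (Real.sqrt (1 + 2 * c * v))⁻¹ := by
    rw [← hsq]; field_simp
  rw [h1, mul_comm ((Real.sqrt (2 * π * v))⁻¹) (Real.exp _), mul_assoc,
    mul_comm (Real.exp _), h2]

/-- Classical-Gaussian specialization of the `G`-heat-equation estimate: for
`0 < σ̲ ≤ σ ≤ σ̄`, `β > 0`, `a ∈ ℝ` and `Z ~ N(0,σ²)`,
`E[exp(−β(a+Z)²/(2σ̄²))] ≤ (1+β)^{−ρ} · exp(−βa²/(2(1+β)σ̄²))` with `ρ = σ̲²/(2σ̄²)`. -/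
theorem gaussian_exp_quadratic_estimate
    {Ω : Type*} [MeasurableSpace Ω] (P : Measure Ω) [IsProbabilityMeasure P]
    (Z : Ω → ℝ) (hZmeas : Measurable Z)
    (σlow σ σup : ℝ) (h1 : 0 < σlow) (h2 : σlow ≤ σ) (h3 : σ ≤ σup)
    (hZ : Measure.map Z P = gaussianReal 0 ⟨σ ^ 2, sq_nonneg σ⟩)
    (β a : ℝ) (hβ : 0 < β) :
    ∫ ω, Real.exp (-(β * (a + Z ω) ^ 2) / (2 * σup ^ 2)) ∂P
      ≤ (1 + β) ^ (-(σlow ^ 2 / (2 * σup ^ 2)))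
        * Real.exp (-(β * a ^ 2) / (2 * (1 + β) * σup ^ 2)) := by
  have hσ : 0 < σ := h1.trans_le h2
  have hσup : 0 < σup := hσ.trans_le h3
  set c : ℝ := β / (2 * σup ^ 2) with hcdef
  have hc : 0 < c := by positivity
  set v : NNReal := ⟨σ ^ 2, sq_nonneg σ⟩ with hvdef
  have hvne : v ≠ 0 := by
    simp only [hvdef, ← NNReal.coe_ne_zero, NNReal.coe_mk]
    exact NNReal.coe_ne_zero.mp (pow_ne_zero 2 hσ.ne')
  have hvcoe : (v : ℝ) = σ ^ 2 := rfl
  -- Step 1: transfer to the Gaussian measure on ℝ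
  have hcont : Continuous fun x : ℝ => Real.exp (-c * (a + x) ^ 2) := by continuity
  have hstep1 : ∫ ω, Real.exp (-(β * (a + Z ω) ^ 2) / (2 * σup ^ 2)) ∂P
      = ∫ x, Real.exp (-c * (a + x) ^ 2) ∂(gaussianReal 0 v) := by
    rw [← hZ, integral_map hZmeas.aemeasurable hcont.aestronglyMeasurable]
    congr 1; ext ω; congr 1; rw [hcdef]; ring
  -- Step 2: compute the integral
  have hstep2 : ∫ x, Real.exp (-c * (a + x) ^ 2) ∂(gaussianReal 0 v)
      = (1 + 2 * c * σ ^ 2) ^ (-(1 : ℝ) / 2)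
        * Real.exp (-c * a ^ 2 / (1 + 2 * c * σ ^ 2)) := by
    rw [gaussianReal_of_var_ne_zero 0 hvne]
    have hpdf : gaussianPDF 0 v = fun x => ((gaussianPDFReal 0 v x).toNNReal : ENNReal) := by
      ext x; rfl
    rw [hpdf, integral_withDensity_eq_integral_smul
      ((measurable_gaussianPDFReal 0 v).real_toNNReal) _]
    rw [← gauss_shift_integral (σ ^ 2) c a (by positivity) hc]
    congr 1; ext x
    rw [NNReal.smul_def, Real.coe_toNNReal _ (gaussianPDFReal_nonneg 0 v x), smul_eq_mul]
    simp only [gaussianPDFReal, hvcoe, sub_zero]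
  rw [hstep1, hstep2]
  -- Step 3: bound the two factors
  have ht1 : σ ^ 2 / σup ^ 2 ≤ 1 := by
    rw [div_le_one (by positivity)]
    exact pow_le_pow_left₀ hσ.le h3 2
  have ht0 : 0 < σ ^ 2 / σup ^ 2 := by positivity
  have hu : 1 + 2 * c * σ ^ 2 = 1 + (σ ^ 2 / σup ^ 2) * β := by
    rw [hcdef]; field_simp
  have hupos : (0 : ℝ) < 1 + 2 * c * σ ^ 2 := by positivity
  have h1β : (0 : ℝ) < 1 + β := by linarith
  have hber : (1 + β) ^ (σ ^ 2 / σup ^ 2) ≤ 1 + 2 * c * σ ^ 2 := by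
    rw [hu]
    exact rpow_one_add_le_one_add_mul_self (by linarith) ht0.le ht1
  have hberpos : (0 : ℝ) < (1 + β) ^ (σ ^ 2 / σup ^ 2) := rpow_pos_of_pos h1β _
  have hA : (1 + 2 * c * σ ^ 2) ^ (-(1 : ℝ) / 2)
      ≤ (1 + β) ^ (-(σlow ^ 2 / (2 * σup ^ 2))) := by
    have step : (1 + 2 * c * σ ^ 2) ^ (-(1 : ℝ) / 2)
        ≤ ((1 + β) ^ (σ ^ 2 / σup ^ 2)) ^ (-(1 : ℝ) / 2) := by
      rw [show (-(1:ℝ)/2) = -(1/2) by norm_num, Real.rpow_neg hupos.le,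
        Real.rpow_neg hberpos.le]
      exact inv_anti₀ (Real.rpow_pos_of_pos hberpos _)
        (Real.rpow_le_rpow hberpos.le hber (by norm_num))
    refine step.trans ?_
    rw [← Real.rpow_mul h1β.le]
    apply Real.rpow_le_rpow_of_exponent_le (by linarith)
    have hsq : σlow ^ 2 ≤ σ ^ 2 := pow_le_pow_left₀ h1.le h2 2
    have heq : σ ^ 2 / σup ^ 2 * (-(1 : ℝ) / 2) = -(σ ^ 2 / (2 * σup ^ 2)) := by ring
    have hmono : σlow ^ 2 / (2 * σup ^ 2) ≤ σ ^ 2 / (2 * σup ^ 2) := by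
      apply div_le_div_of_nonneg_right hsq (by positivity)
    linarith [heq]
  have hB : Real.exp (-c * a ^ 2 / (1 + 2 * c * σ ^ 2))
      ≤ Real.exp (-(β * a ^ 2) / (2 * (1 + β) * σup ^ 2)) := by
    apply Real.exp_le_exp.mpr
    have heq : -c * a ^ 2 / (1 + 2 * c * σ ^ 2)
        = -(β * a ^ 2 / (2 * σup ^ 2 * (1 + 2 * c * σ ^ 2))) := by
      rw [hcdef]; field_simp
    have h2c : 2 * c * σ ^ 2 ≤ β := by
      have : 2 * c * σ ^ 2 = β * (σ ^ 2 / σup ^ 2) := by rw [hcdef]; field_simp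
      nlinarith [ht1, hβ.le]
    have hden : 2 * σup ^ 2 * (1 + 2 * c * σ ^ 2) ≤ 2 * (1 + β) * σup ^ 2 := by
      nlinarith [hσup, sq_nonneg σup]
    have hmono : β * a ^ 2 / (2 * (1 + β) * σup ^ 2)
        ≤ β * a ^ 2 / (2 * σup ^ 2 * (1 + 2 * c * σ ^ 2)) :=
      div_le_div_of_nonneg_left (by positivity) (by positivity) hden
    rw [heq, neg_div]
    linarith
  calc (1 + 2 * c * σ ^ 2) ^ (-(1 : ℝ) / 2) * Real.exp (-c * a ^ 2 / (1 + 2 * c * σ ^ 2))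
      ≤ (1 + β) ^ (-(σlow ^ 2 / (2 * σup ^ 2)))
        * Real.exp (-(β * a ^ 2) / (2 * (1 + β) * σup ^ 2)) :=
    mul_le_mul hA hB (Real.exp_pos _).le (Real.rpow_nonneg (by linarith) _)
end

section
/- (Threshold choice, classical instantiation of Theorem 4.1.) Under the setup of the missed-detection bound — (Ω, F, P) a probability space with jointly independent X₁, ε₁, Z₁, …, Xₙ, εₙ, Zₙ; Zᵢ ~ N(0,σᵢ²) with 0 < σ̲ ≤ σᵢ ≤ σ̄; εᵢ nonnegative identically distributed; |Xᵢ| ≥ σ̲_X > 0 a.s. — let β > 0, p > 0, and set λ := −(2σ̄²n/β)·ln( E[exp(−βσ̲_X²ε₁²/(2σ̄²(1+β)))] ) + (σ̲²n/β)·ln(1+β) + (2σ̄²/β)·ln p. Then P( Σᵢ₌₁ⁿ (εᵢXᵢ + Zᵢ)² ≤ λ ) ≤ p. -/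
open MeasureTheory ProbabilityTheory Real Finset NNReal

lemma mdt_integrable_of_le_one {Ω : Type*} [MeasurableSpace Ω] (P : Measure Ω)
    [IsFiniteMeasure P] {f : Ω → ℝ} (hm : AEStronglyMeasurable f P)
    (h0 : ∀ ω, 0 ≤ f ω) (h1 : ∀ ω, f ω ≤ 1) : Integrable f P :=
  Integrable.mono' (integrable_const 1) hm
    (Filter.Eventually.of_forall fun ω => by
      rw [Real.norm_eq_abs, abs_of_nonneg (h0 ω)]; exact h1 ω)

lemma mdt_gauss_int (t a : ℝ) (ht : 0 < t) (v : ℝ≥0) (hv : 0 < (v : ℝ)) :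
    ∫ z, Real.exp (-(t * (a + z) ^ 2)) ∂(gaussianReal 0 v)
      = (Real.sqrt (1 + 2 * t * v))⁻¹ * Real.exp (-(t * a ^ 2) / (1 + 2 * t * v)) := by
  have hv0 : v ≠ 0 := by exact_mod_cast hv.ne'
  set b : ℝ := t + 1 / (2 * v) with hb_def
  have hb : 0 < b := by positivity
  have h2tv : (0:ℝ) < 1 + 2 * t * v := by positivity
  set m : ℝ := t * a / b with hm_def
  set r : ℝ := t * a ^ 2 / (1 + 2 * t * v) with hr_def
  have h2vb : 2 * (v:ℝ) * b = 1 + 2 * t * v := by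
    rw [hb_def, mul_add, mul_one_div_cancel (mul_pos two_pos hv).ne']
    ring
  rw [gaussianReal_of_var_ne_zero 0 hv0]
  have hpdf : (gaussianPDF 0 v) = fun x => ((Real.toNNReal (gaussianPDFReal 0 v x) : ℝ≥0) : ENNReal) := by
    funext x; rw [gaussianPDF]; rfl
  rw [hpdf, integral_withDensity_eq_integral_smul
    (by exact (measurable_gaussianPDFReal 0 v).real_toNNReal)]
  have key : ∀ x : ℝ, (Real.toNNReal (gaussianPDFReal 0 v x)) • Real.exp (-(t * (a + x) ^ 2))
      = ((Real.sqrt (2 * π * v))⁻¹ * Real.exp (-r)) * Real.exp (-(b * (x + m) ^ 2)) := by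
    intro x
    have hexp : -(x - 0) ^ 2 / (2 * (v:ℝ)) + -(t * (a + x) ^ 2) = -r + -(b * (x + m) ^ 2) := by
      rw [hr_def, hm_def, ← h2vb, hb_def]
      field_simp
      ring
    rw [NNReal.smul_def, smul_eq_mul, Real.coe_toNNReal _ (gaussianPDFReal_nonneg 0 v x),
      gaussianPDFReal, mul_assoc, ← Real.exp_add, hexp, Real.exp_add, ← mul_assoc]
  simp_rw [key]
  rw [integral_const_mul]
  have htrans : ∫ x : ℝ, Real.exp (-(b * (x + m) ^ 2)) = ∫ x : ℝ, Real.exp (-(b * x ^ 2)) := by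
    exact integral_add_right_eq_self (fun y => Real.exp (-(b * y ^ 2))) m
  rw [htrans]
  have hg : ∫ x : ℝ, Real.exp (-(b * x ^ 2)) = Real.sqrt (π / b) := by
    simpa [neg_mul] using integral_gaussian b
  rw [hg]
  have hfac : (Real.sqrt (2 * π * v))⁻¹ * Real.sqrt (π / b) = (Real.sqrt (1 + 2 * t * v))⁻¹ := by
    rw [← Real.sqrt_inv, ← Real.sqrt_mul (by positivity)]
    rw [← Real.sqrt_inv]
    congr 1
    rw [← h2vb]
    field_simp
  calc (Real.sqrt (2 * π * v))⁻¹ * Real.exp (-r) * Real.sqrt (π / b)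
      = ((Real.sqrt (2 * π * v))⁻¹ * Real.sqrt (π / b)) * Real.exp (-r) := by ring
    _ = (Real.sqrt (1 + 2 * t * v))⁻¹ * Real.exp (-r) := by rw [hfac]
    _ = (Real.sqrt (1 + 2 * t * v))⁻¹ * Real.exp (-(t * a ^ 2) / (1 + 2 * t * v)) := by
        rw [hr_def, neg_div]

lemma mdt_factor_eq {Ω : Type*} [MeasurableSpace Ω] (P : Measure Ω) [IsProbabilityMeasure P]
    {A W : Ω → ℝ} (hA : Measurable A) (hW : Measurable W)
    (hAW : IndepFun A W P) {v : ℝ≥0} (hv : 0 < (v : ℝ))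
    (hWlaw : P.map W = gaussianReal 0 v) {t : ℝ} (ht : 0 < t) :
    ∫ ω, Real.exp (-(t * (A ω + W ω) ^ 2)) ∂P
      = (Real.sqrt (1 + 2 * t * v))⁻¹
        * ∫ ω, Real.exp (-(t * (A ω) ^ 2) / (1 + 2 * t * v)) ∂P := by
  have h2tv : (0:ℝ) < 1 + 2 * t * v := by positivity
  haveI : IsProbabilityMeasure (P.map A) := Measure.isProbabilityMeasure_map hA.aemeasurable
  haveI : IsProbabilityMeasure (P.map W) := Measure.isProbabilityMeasure_map hW.aemeasurable
  have hmap := (indepFun_iff_map_prod_eq_prod_map_map hA.aemeasurable hW.aemeasurable).mp hAW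
  have hF2c : Continuous (fun q : ℝ × ℝ => Real.exp (-(t * (q.1 + q.2) ^ 2))) := by
    fun_prop
  have hint : Integrable (fun q : ℝ × ℝ => Real.exp (-(t * (q.1 + q.2) ^ 2)))
      ((P.map A).prod (P.map W)) := by
    refine mdt_integrable_of_le_one _ hF2c.aestronglyMeasurable (fun q => (Real.exp_pos _).le)
      (fun q => Real.exp_le_one_iff.mpr (neg_nonpos.mpr (by positivity)))
  calc ∫ ω, Real.exp (-(t * (A ω + W ω) ^ 2)) ∂P
      = ∫ q, Real.exp (-(t * (q.1 + q.2) ^ 2))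
          ∂(P.map (fun ω => (A ω, W ω))) := by
        rw [integral_map (hA.prodMk hW).aemeasurable hF2c.aestronglyMeasurable]
    _ = ∫ q, Real.exp (-(t * (q.1 + q.2) ^ 2)) ∂((P.map A).prod (P.map W)) := by rw [hmap]
    _ = ∫ a, ∫ z, Real.exp (-(t * (a + z) ^ 2)) ∂(P.map W) ∂(P.map A) := by
        rw [MeasureTheory.integral_prod _ hint]
    _ = ∫ a, (Real.sqrt (1 + 2 * t * v))⁻¹ * Real.exp (-(t * a ^ 2) / (1 + 2 * t * v))
          ∂(P.map A) := by
        congr 1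
        funext a
        rw [hWlaw]
        exact mdt_gauss_int t a ht v hv
    _ = (Real.sqrt (1 + 2 * t * v))⁻¹
          * ∫ a, Real.exp (-(t * a ^ 2) / (1 + 2 * t * v)) ∂(P.map A) := integral_const_mul _ _
    _ = (Real.sqrt (1 + 2 * t * v))⁻¹
          * ∫ ω, Real.exp (-(t * (A ω) ^ 2) / (1 + 2 * t * v)) ∂P := by
        rw [integral_map hA.aemeasurable]
        exact (Continuous.aestronglyMeasurable (by fun_prop))

lemma mdt_prod_integral {Ω : Type*} [MeasurableSpace Ω] (P : Measure Ω) [IsProbabilityMeasure P]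
    (n : ℕ) (X ε Z : Fin n → Ω → ℝ)
    (hXmeas : ∀ i, Measurable (X i)) (hεmeas : ∀ i, Measurable (ε i))
    (hZmeas : ∀ i, Measurable (Z i))
    (hindep : iIndepFun
      (Sum.elim X (Sum.elim ε Z) : (Fin n ⊕ (Fin n ⊕ Fin n)) → Ω → ℝ) P)
    (t : ℝ) (s : Finset (Fin n)) :
    ∫ ω, ∏ j ∈ s, Real.exp (-(t * (ε j ω * X j ω + Z j ω) ^ 2)) ∂P
      = ∏ j ∈ s, ∫ ω, Real.exp (-(t * (ε j ω * X j ω + Z j ω) ^ 2)) ∂P := by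
  classical
  set F : (Fin n ⊕ (Fin n ⊕ Fin n)) → Ω → ℝ := Sum.elim X (Sum.elim ε Z) with hF
  have hFmeas : ∀ j, Measurable (F j) := by
    rintro (i | i | i)
    exacts [hXmeas i, hεmeas i, hZmeas i]
  induction s using Finset.induction_on with
  | empty => simp
  | @insert i s hi IH =>
    set S1 : Finset (Fin n ⊕ (Fin n ⊕ Fin n)) :=
      {Sum.inl i, Sum.inr (Sum.inl i), Sum.inr (Sum.inr i)} with hS1
    set S2 : Finset (Fin n ⊕ (Fin n ⊕ Fin n)) :=
      s.biUnion (fun j => {Sum.inl j, Sum.inr (Sum.inl j), Sum.inr (Sum.inr j)}) with hS2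
    have hmem : ∀ j ∈ s, Sum.inl j ∈ S2 ∧ Sum.inr (Sum.inl j) ∈ S2 ∧
        Sum.inr (Sum.inr j) ∈ S2 := by
      intro j hj
      refine ⟨?_, ?_, ?_⟩ <;> · rw [hS2, Finset.mem_biUnion]; exact ⟨j, hj, by simp⟩
    have hdisj : Disjoint S1 S2 := by
      rw [Finset.disjoint_left]
      intro x hx1 hx2
      rw [hS2, Finset.mem_biUnion] at hx2
      obtain ⟨j, hj, hxj⟩ := hx2
      rw [hS1] at hx1
      simp only [Finset.mem_insert, Finset.mem_singleton] at hx1 hxj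
      have : i = j := by
        rcases hx1 with rfl | rfl | rfl <;> rcases hxj with h | h | h <;> simp_all
      exact hi (this ▸ hj)
    have hIF := hindep.indepFun_finset S1 S2 hdisj hFmeas
    set φ : ({ x // x ∈ S1 } → ℝ) → ℝ := fun v =>
      Real.exp (-(t * (v ⟨Sum.inr (Sum.inl i), by simp [hS1]⟩ * v ⟨Sum.inl i, by simp [hS1]⟩
        + v ⟨Sum.inr (Sum.inr i), by simp [hS1]⟩) ^ 2)) with hφdef
    set ψ : ({ x // x ∈ S2 } → ℝ) → ℝ := fun v =>
      ∏ j ∈ s.attach, Real.exp (-(t * (v ⟨Sum.inr (Sum.inl j.1), ((hmem j.1 j.2).2).1⟩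
        * v ⟨Sum.inl j.1, (hmem j.1 j.2).1⟩
        + v ⟨Sum.inr (Sum.inr j.1), ((hmem j.1 j.2).2).2⟩) ^ 2)) with hψdef
    have hφ : Measurable φ := by fun_prop
    have hψ : Measurable ψ := by
      apply Finset.measurable_prod
      intro j _
      fun_prop
    have hcomp := hIF.comp hφ hψ
    have e1 : (φ ∘ fun ω (j : { x // x ∈ S1 }) => F j ω)
        = fun ω => Real.exp (-(t * (ε i ω * X i ω + Z i ω) ^ 2)) := rfl
    have hYm : ∀ j : Fin n, Measurable fun ω => Real.exp (-(t * (ε j ω * X j ω + Z j ω) ^ 2)) :=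
      fun j => Real.measurable_exp.comp
        ((((((hεmeas j).mul (hXmeas j)).add (hZmeas j)).pow_const 2).const_mul t).neg)
    have e2 : (ψ ∘ fun ω (j : { x // x ∈ S2 }) => F j ω)
        = fun ω => ∏ j ∈ s, Real.exp (-(t * (ε j ω * X j ω + Z j ω) ^ 2)) := by
      funext ω
      exact Finset.prod_attach s (fun j => Real.exp (-(t * (ε j ω * X j ω + Z j ω) ^ 2)))
    rw [e1, e2] at hcomp
    rw [Finset.prod_insert hi]
    have hprod := hcomp.integral_fun_mul_eq_mul_integral (hYm i).aestronglyMeasurable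
      (Finset.measurable_prod s (fun j _ => hYm j)).aestronglyMeasurable
    simp only [Finset.prod_insert hi]
    rw [hprod, IH]

set_option maxHeartbeats 1000000 in
/-- Threshold choice (classical instantiation of Theorem 4.1): under the setup of the
missed-detection bound, with
`λ = −(2σ̄²n/β)·ln(E[exp(−βσ̲_X²ε₁²/(2σ̄²(1+β)))]) + (σ̲²n/β)·ln(1+β) + (2σ̄²/β)·ln p`,
one has `P(Σ (εᵢXᵢ+Zᵢ)² ≤ λ) ≤ p`. -/
theorem missed_detection_threshold
    {Ω : Type*} [MeasurableSpace Ω] (P : Measure Ω) [IsProbabilityMeasure P]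
    (n : ℕ) (hn : 0 < n)
    (X ε Z : Fin n → Ω → ℝ)
    (hXmeas : ∀ i, Measurable (X i)) (hεmeas : ∀ i, Measurable (ε i))
    (hZmeas : ∀ i, Measurable (Z i))
    (hindep : iIndepFun
      (Sum.elim X (Sum.elim ε Z) : (Fin n ⊕ (Fin n ⊕ Fin n)) → Ω → ℝ) P)
    (σ : Fin n → ℝ) (σlow σup : ℝ) (hσlow : 0 < σlow) (hσle : σlow ≤ σup)
    (hσ : ∀ i, σlow ≤ σ i ∧ σ i ≤ σup)
    (hZ : ∀ i, Measure.map (Z i) P = gaussianReal 0 ⟨(σ i) ^ 2, sq_nonneg (σ i)⟩)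
    (hεpos : ∀ i, ∀ᵐ ω ∂P, 0 ≤ ε i ω)
    (hεid : ∀ i, Measure.map (ε i) P = Measure.map (ε ⟨0, hn⟩) P)
    (σX : ℝ) (hσX : 0 < σX)
    (hX : ∀ i, ∀ᵐ ω ∂P, σX ≤ |X i ω|)
    (β p : ℝ) (hβ : 0 < β) (hp : 0 < p)
    (lam : ℝ)
    (hlam : lam = -(2 * σup ^ 2 * n / β)
        * Real.log (∫ ω, Real.exp (-(β * σX ^ 2 * (ε ⟨0, hn⟩ ω) ^ 2)
            / (2 * σup ^ 2 * (1 + β))) ∂P)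
      + (σlow ^ 2 * n / β) * Real.log (1 + β)
      + (2 * σup ^ 2 / β) * Real.log p) :
    P {ω | ∑ i, (ε i ω * X i ω + Z i ω) ^ 2 ≤ lam} ≤ ENNReal.ofReal p := by
  have hσup : 0 < σup := lt_of_lt_of_le hσlow hσle
  have hβ1 : (0:ℝ) < 1 + β := by linarith
  set t : ℝ := β / (2 * σup ^ 2) with ht_def
  have ht : 0 < t := div_pos hβ (by positivity)
  set M : ℝ := ∫ ω, Real.exp (-(β * σX ^ 2 * (ε ⟨0, hn⟩ ω) ^ 2)
      / (2 * σup ^ 2 * (1 + β))) ∂P with hM_def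
  set c : ℝ := (Real.sqrt (1 + 2 * t * σlow ^ 2))⁻¹ with hc_def
  have hcs : (1:ℝ) ≤ Real.sqrt (1 + 2 * t * σlow ^ 2) := by
    calc (1:ℝ) = Real.sqrt 1 := Real.sqrt_one.symm
      _ ≤ Real.sqrt (1 + 2 * t * σlow ^ 2) :=
        Real.sqrt_le_sqrt (by nlinarith [mul_nonneg ht.le (sq_nonneg σlow)])
  have hc0 : 0 < c := by
    rw [hc_def]
    exact inv_pos.mpr (lt_of_lt_of_le one_pos hcs)
  have hYm : ∀ i : Fin n, Measurable fun ω => (ε i ω * X i ω + Z i ω) ^ 2 :=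
    fun i => (((hεmeas i).mul (hXmeas i)).add (hZmeas i)).pow_const 2
  have hFmeas : ∀ j, Measurable ((Sum.elim X (Sum.elim ε Z) :
      (Fin n ⊕ (Fin n ⊕ Fin n)) → Ω → ℝ) j) := by
    rintro (k | k | k)
    exacts [hXmeas k, hεmeas k, hZmeas k]
  -- the ε-integrand and its properties
  have hhc : Continuous fun x : ℝ => Real.exp (-(t * (σX ^ 2 * x ^ 2)) / (1 + β)) := by fun_prop
  have hMalt : ∀ i : Fin n,
      ∫ ω, Real.exp (-(t * (σX ^ 2 * (ε i ω) ^ 2)) / (1 + β)) ∂P = M := by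
    intro i
    calc ∫ ω, Real.exp (-(t * (σX ^ 2 * (ε i ω) ^ 2)) / (1 + β)) ∂P
        = ∫ x, Real.exp (-(t * (σX ^ 2 * x ^ 2)) / (1 + β)) ∂(P.map (ε i)) :=
          (integral_map (hεmeas i).aemeasurable hhc.aestronglyMeasurable).symm
      _ = ∫ x, Real.exp (-(t * (σX ^ 2 * x ^ 2)) / (1 + β)) ∂(P.map (ε ⟨0, hn⟩)) := by
          rw [hεid i]
      _ = ∫ ω, Real.exp (-(t * (σX ^ 2 * (ε ⟨0, hn⟩ ω) ^ 2)) / (1 + β)) ∂P :=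
          integral_map (hεmeas _).aemeasurable hhc.aestronglyMeasurable
      _ = M := by
          rw [hM_def]
          congr 1
          funext ω
          congr 1
          rw [ht_def]
          field_simp
  -- per-factor bound
  have hGle : ∀ i : Fin n,
      ∫ ω, Real.exp (-(t * (ε i ω * X i ω + Z i ω) ^ 2)) ∂P ≤ c * M := by
    intro i
    have hσi : 0 < σ i := lt_of_lt_of_le hσlow (hσ i).1
    have hAm : Measurable fun ω => ε i ω * X i ω := (hεmeas i).mul (hXmeas i)
    have h3 := hindep.indepFun_prodMk hFmeas
      (Sum.inr (Sum.inl i)) (Sum.inl i) (Sum.inr (Sum.inr i)) (by simp) (by simp)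
    have hAZ : IndepFun (fun ω => ε i ω * X i ω) (Z i) P := by
      have := h3.comp
        (show Measurable fun q : ℝ × ℝ => q.1 * q.2 from measurable_fst.mul measurable_snd)
        (measurable_id : Measurable fun x : ℝ => x)
      exact this
    have hvi : (0:ℝ) < ((⟨(σ i) ^ 2, sq_nonneg (σ i)⟩ : ℝ≥0) : ℝ) := by
      show (0:ℝ) < (σ i) ^ 2
      positivity
    have heq := mdt_factor_eq P hAm (hZmeas i) hAZ hvi (hZ i) ht
    have hDi : (0:ℝ) < 1 + 2 * t * (σ i) ^ 2 := by positivity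
    have htmul : t * (2 * σup ^ 2) = β := by
      rw [ht_def]; field_simp
    have hσ2 : (σ i) ^ 2 ≤ σup ^ 2 := by nlinarith [(hσ i).2, hσi.le]
    have hDle : 1 + 2 * t * (σ i) ^ 2 ≤ 1 + β := by
      nlinarith [mul_le_mul_of_nonneg_left hσ2 ht.le]
    -- pointwise bound of inner integrand
    have hub : ∀ᵐ ω ∂P, Real.exp (-(t * (ε i ω * X i ω) ^ 2) / (1 + 2 * t * (σ i) ^ 2))
        ≤ Real.exp (-(t * (σX ^ 2 * (ε i ω) ^ 2)) / (1 + β)) := by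
      filter_upwards [hX i, hεpos i] with ω hXω hεω
      apply Real.exp_le_exp.mpr
      rw [neg_div, neg_div, neg_le_neg_iff]
      have hA2 : σX ^ 2 * (ε i ω) ^ 2 ≤ (ε i ω * X i ω) ^ 2 := by
        rw [mul_pow]
        have : σX ^ 2 ≤ (X i ω) ^ 2 := by
          rw [← sq_abs (X i ω)]
          exact pow_le_pow_left₀ hσX.le hXω 2
        nlinarith [sq_nonneg (ε i ω)]
      calc t * (σX ^ 2 * (ε i ω) ^ 2) / (1 + β) ≤ t * (ε i ω * X i ω) ^ 2 / (1 + β) := by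
            gcongr
        _ ≤ t * (ε i ω * X i ω) ^ 2 / (1 + 2 * t * (σ i) ^ 2) := by
            gcongr
    have hint1 : Integrable
        (fun ω => Real.exp (-(t * (ε i ω * X i ω) ^ 2) / (1 + 2 * t * (σ i) ^ 2))) P := by
      refine mdt_integrable_of_le_one P ?_ (fun ω => (Real.exp_pos _).le) (fun ω => ?_)
      · exact (Real.measurable_exp.comp
          ((((hAm.pow_const 2).const_mul t).neg).div_const _)).aestronglyMeasurable
      · apply Real.exp_le_one_iff.mpr
        rw [neg_div]
        apply neg_nonpos.mpr
        positivity
    have hint2 : Integrable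
        (fun ω => Real.exp (-(t * (σX ^ 2 * (ε i ω) ^ 2)) / (1 + β))) P := by
      refine mdt_integrable_of_le_one P ?_ (fun ω => (Real.exp_pos _).le) (fun ω => ?_)
      · exact (hhc.comp_aestronglyMeasurable (hεmeas i).aestronglyMeasurable)
      · apply Real.exp_le_one_iff.mpr
        rw [neg_div]
        apply neg_nonpos.mpr
        positivity
    calc ∫ ω, Real.exp (-(t * (ε i ω * X i ω + Z i ω) ^ 2)) ∂P
        = (Real.sqrt (1 + 2 * t * (σ i) ^ 2))⁻¹
            * ∫ ω, Real.exp (-(t * (ε i ω * X i ω) ^ 2) / (1 + 2 * t * (σ i) ^ 2)) ∂P := heq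
      _ ≤ c * ∫ ω, Real.exp (-(t * (σX ^ 2 * (ε i ω) ^ 2)) / (1 + β)) ∂P := by
          apply mul_le_mul
          · rw [hc_def]
            apply inv_anti₀ (lt_of_lt_of_le one_pos hcs)
            apply Real.sqrt_le_sqrt
            have hsq : σlow ^ 2 ≤ (σ i) ^ 2 := by nlinarith [(hσ i).1, hσlow.le]
            nlinarith [mul_le_mul_of_nonneg_left hsq ht.le]
          · exact integral_mono_ae hint1 hint2 hub
          · exact integral_nonneg fun ω => (Real.exp_pos _).le
          · exact hc0.le
      _ = c * M := by rw [hMalt i]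
  -- Chernoff bound
  have hSnn : ∀ ω, 0 ≤ ∑ i, (ε i ω * X i ω + Z i ω) ^ 2 :=
    fun ω => Finset.sum_nonneg fun i _ => sq_nonneg _
  have hSm : Measurable fun ω => ∑ i, (ε i ω * X i ω + Z i ω) ^ 2 :=
    Finset.measurable_sum _ fun i _ => hYm i
  have hintS : Integrable (fun ω => Real.exp ((-t) * ∑ i, (ε i ω * X i ω + Z i ω) ^ 2)) P := by
    refine mdt_integrable_of_le_one P
      (Real.measurable_exp.comp (hSm.const_mul (-t))).aestronglyMeasurable
      (fun ω => (Real.exp_pos _).le) (fun ω => Real.exp_le_one_iff.mpr ?_)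
    have h1 := hSnn ω
    nlinarith [ht.le]
  have hcher := measure_le_le_exp_mul_mgf (μ := P)
    (X := fun ω => ∑ i, (ε i ω * X i ω + Z i ω) ^ 2) (t := -t) lam
    (neg_nonpos.mpr ht.le) hintS
  -- mgf as a product
  have hmgf : mgf (fun ω => ∑ i, (ε i ω * X i ω + Z i ω) ^ 2) P (-t)
      = ∏ i, ∫ ω, Real.exp (-(t * (ε i ω * X i ω + Z i ω) ^ 2)) ∂P := by
    rw [← mdt_prod_integral P n X ε Z hXmeas hεmeas hZmeas hindep t Finset.univ]
    rw [mgf]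
    congr 1
    funext ω
    show Real.exp ((-t) * ∑ i, (ε i ω * X i ω + Z i ω) ^ 2)
      = ∏ i, Real.exp (-(t * (ε i ω * X i ω + Z i ω) ^ 2))
    rw [show (-t) * ∑ i, (ε i ω * X i ω + Z i ω) ^ 2
        = ∑ i, -(t * (ε i ω * X i ω + Z i ω) ^ 2) by
      rw [Finset.mul_sum]; simp [neg_mul], Real.exp_sum]
  have hGnn : ∀ i : Fin n, 0 ≤ ∫ ω, Real.exp (-(t * (ε i ω * X i ω + Z i ω) ^ 2)) ∂P :=
    fun i => integral_nonneg fun ω => (Real.exp_pos _).le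
  have hprodle : ∏ i, ∫ ω, Real.exp (-(t * (ε i ω * X i ω + Z i ω) ^ 2)) ∂P ≤ (c * M) ^ n := by
    calc ∏ i, ∫ ω, Real.exp (-(t * (ε i ω * X i ω + Z i ω) ^ 2)) ∂P
        ≤ ∏ _i : Fin n, (c * M) :=
          Finset.prod_le_prod (fun i _ => hGnn i) (fun i _ => hGle i)
      _ = (c * M) ^ n := by rw [Finset.prod_const, Finset.card_univ, Fintype.card_fin]
  -- positivity of M
  have hMint : Integrable (fun ω => Real.exp (-(β * σX ^ 2 * (ε ⟨0, hn⟩ ω) ^ 2)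
      / (2 * σup ^ 2 * (1 + β)))) P := by
    refine mdt_integrable_of_le_one P ?_ (fun ω => (Real.exp_pos _).le) (fun ω => ?_)
    · exact (Real.measurable_exp.comp
        ((((hεmeas _).pow_const 2).const_mul (β * σX ^ 2)).neg.div_const _)).aestronglyMeasurable
    · apply Real.exp_le_one_iff.mpr
      rw [neg_div]
      apply neg_nonpos.mpr
      positivity
  have hM0 : 0 < M := by
    rw [hM_def]
    rw [integral_pos_iff_support_of_nonneg_ae
      (Filter.Eventually.of_forall fun ω => (Real.exp_pos _).le) hMint]
    have hsupp : (Function.support fun ω => Real.exp (-(β * σX ^ 2 * (ε ⟨0, hn⟩ ω) ^ 2)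
        / (2 * σup ^ 2 * (1 + β)))) = Set.univ := by
      ext ω
      simp [Function.mem_support, (Real.exp_pos _).ne']
    rw [hsupp]
    simp
  -- numerics
  set r : ℝ := σlow ^ 2 / (2 * σup ^ 2) with hr_def
  have hr0 : 0 < r := by positivity
  have h2r1 : 2 * r ≤ 1 := by
    rw [hr_def]
    rw [show 2 * (σlow ^ 2 / (2 * σup ^ 2)) = σlow ^ 2 / σup ^ 2 by field_simp]
    rw [div_le_one (by positivity)]
    nlinarith [hσle, hσlow.le]
  have htlam : t * lam = (n:ℝ) * Real.log M⁻¹ + (r * (n:ℝ)) * Real.log (1 + β) + Real.log p := by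
    rw [hlam, ht_def, hr_def, Real.log_inv]
    field_simp
  have hexp_tlam : Real.exp (t * lam) = M⁻¹ ^ n * (1 + β) ^ (r * (n:ℝ)) * p := by
    rw [htlam, Real.exp_add, Real.exp_add]
    congr 1
    congr 1
    · rw [Real.exp_nat_mul, Real.exp_log (inv_pos.mpr hM0)]
    · rw [Real.rpow_def_of_pos hβ1, mul_comm (Real.log (1 + β))]
    · exact Real.exp_log hp
  have hD : 1 + 2 * t * σlow ^ 2 = 1 + 2 * r * β := by
    rw [ht_def, hr_def]
    field_simp
  have hbern : (1 + β) ^ (2 * r) ≤ 1 + 2 * r * β :=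
    rpow_one_add_le_one_add_mul_self (by linarith) (by positivity) h2r1
  have hkey : (1 + β) ^ (r : ℝ) * c ≤ 1 := by
    have hsq : ((1 + β) ^ (r:ℝ)) ^ 2 ≤ 1 + 2 * t * σlow ^ 2 := by
      rw [hD, ← Real.rpow_natCast ((1 + β) ^ (r:ℝ)) 2, ← Real.rpow_mul hβ1.le]
      rw [show r * (2:ℕ) = 2 * r by push_cast; ring]
      exact hbern
    have hle : (1 + β) ^ (r:ℝ) ≤ Real.sqrt (1 + 2 * t * σlow ^ 2) :=
      Real.le_sqrt_of_sq_le hsq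
    calc (1 + β) ^ (r:ℝ) * c ≤ Real.sqrt (1 + 2 * t * σlow ^ 2) * c :=
          mul_le_mul_of_nonneg_right hle hc0.le
      _ = 1 := by
        rw [hc_def]
        exact mul_inv_cancel₀ (by linarith [hcs])
  -- final bound
  have hfinal : Real.exp (-(-t) * lam)
      * mgf (fun ω => ∑ i, (ε i ω * X i ω + Z i ω) ^ 2) P (-t) ≤ p := by
    rw [neg_neg, hmgf]
    calc Real.exp (t * lam) * ∏ i, ∫ ω, Real.exp (-(t * (ε i ω * X i ω + Z i ω) ^ 2)) ∂P
        ≤ Real.exp (t * lam) * (c * M) ^ n :=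
          mul_le_mul_of_nonneg_left hprodle (Real.exp_pos _).le
      _ = p * (((1 + β) ^ (r:ℝ)) ^ n * c ^ n) := by
          rw [hexp_tlam, mul_pow]
          rw [show (1 + β) ^ (r * (n:ℝ)) = ((1 + β) ^ (r:ℝ)) ^ n by
            rw [Real.rpow_mul hβ1.le, Real.rpow_natCast]]
          have hMM : M⁻¹ ^ n * M ^ n = 1 := by
            rw [← mul_pow, inv_mul_cancel₀ hM0.ne', one_pow]
          calc M⁻¹ ^ n * ((1 + β) ^ (r:ℝ)) ^ n * p * (c ^ n * M ^ n)
              = p * (((1 + β) ^ (r:ℝ)) ^ n * c ^ n) * (M⁻¹ ^ n * M ^ n) := by ring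
            _ = p * (((1 + β) ^ (r:ℝ)) ^ n * c ^ n) := by rw [hMM, mul_one]
      _ ≤ p * 1 := by
          apply mul_le_mul_of_nonneg_left _ hp.le
          rw [← mul_pow]
          exact pow_le_one₀ (by positivity) hkey
      _ = p := mul_one p
  calc P {ω | ∑ i, (ε i ω * X i ω + Z i ω) ^ 2 ≤ lam}
      = ENNReal.ofReal ((P {ω | ∑ i, (ε i ω * X i ω + Z i ω) ^ 2 ≤ lam}).toReal) :=
        (ENNReal.ofReal_toReal (measure_ne_top _ _)).symm
    _ ≤ ENNReal.ofReal p := ENNReal.ofReal_le_ofReal (hcher.trans hfinal)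
end

section
/- (Classical instantiation of Corollary 4.1.) Let (Ω, F, P) be a probability space carrying jointly independent real random variables X₁, ε₁, Z₁, …, Xₙ, εₙ, Zₙ such that: each Zᵢ ~ N(0,σᵢ²) with 0 < σ̲ ≤ σᵢ ≤ σ̄; the εᵢ are nonnegative and identically distributed; and |Xᵢ| = σ̄_X almost surely for a constant σ̄_X > 0. Then for every β > 0 and λ ∈ ℝ, P( Σᵢ₌₁ⁿ (εᵢXᵢ + Zᵢ)² ≤ λ ) ≤ exp(βλ/(2σ̄²)) · (1+β)^{−ρn} · ( E[exp(−βε₁²σ̄_X²/(2σ̄²(1+β)))] )ⁿ, where ρ := σ̲²/(2σ̄²). -/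
open MeasureTheory ProbabilityTheory Real Finset
open scoped NNReal ENNReal

lemma gauss_quad (t : ℝ) (ht : 0 < t) (a : ℝ) (v : ℝ≥0) (hv : 0 < (v:ℝ)) :
    ∫ z, Real.exp (-(t * (a + z) ^ 2)) ∂(gaussianReal 0 v) =
      Real.exp (-(t * a ^ 2) / (1 + 2 * t * v)) / Real.sqrt (1 + 2 * t * v) := by
  have hv0 : v ≠ 0 := by
    intro h; rw [h] at hv; simp at hv
  have hπ := Real.pi_pos
  set c : ℝ := t + 1 / (2 * v) with hc
  have hcpos : 0 < c := by positivity
  have h1 : (0:ℝ) < 1 + 2 * t * v := by positivity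
  set m : ℝ := 2 * t * v * a / (1 + 2 * t * v) with hm
  rw [gaussianReal_of_var_ne_zero 0 hv0]
  have hpdf : gaussianPDF 0 v = fun x => ((Real.toNNReal (gaussianPDFReal 0 v x) : ℝ≥0) : ℝ≥0∞) := rfl
  rw [hpdf, integral_withDensity_eq_integral_smul
    ((measurable_gaussianPDFReal 0 v).real_toNNReal)]
  have key : ∀ z : ℝ, (Real.toNNReal (gaussianPDFReal 0 v z)) • Real.exp (-(t*(a+z)^2))
      = (Real.sqrt (2*π*v))⁻¹ * Real.exp (-(t*a^2)/(1+2*t*v)) * Real.exp (-c * (z + m)^2) := by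
    intro z
    rw [NNReal.smul_def, Real.coe_toNNReal _ (gaussianPDFReal_nonneg 0 v z),
      gaussianPDFReal]
    have comb : ∀ x y : ℝ, Real.exp x * Real.exp y = Real.exp (x + y) :=
      fun x y => (Real.exp_add x y).symm
    conv_lhs => rw [smul_eq_mul, mul_assoc, comb]
    conv_rhs => rw [mul_assoc, comb]
    congr 1
    congr 1
    have h2v : (2:ℝ) * v ≠ 0 := by positivity
    have h1' : (1:ℝ) + 2 * t * v ≠ 0 := ne_of_gt h1
    rw [hm, hc]
    field_simp
    ring
  simp_rw [key]
  rw [integral_const_mul]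
  have hshift : ∫ z : ℝ, Real.exp (-c * (z + m)^2) = ∫ z : ℝ, Real.exp (-c * z^2) :=
    integral_add_right_eq_self (fun z => Real.exp (-c * z^2)) m
  rw [hshift, integral_gaussian c]
  -- algebra
  have hsq : Real.sqrt (π / c) = Real.sqrt (2*π*v) / Real.sqrt (1 + 2*t*v) := by
    rw [← Real.sqrt_div (by positivity)]
    congr 1
    rw [hc]
    field_simp
    ring
  rw [hsq]
  have h2 : Real.sqrt (2*π*v) ≠ 0 := by positivity
  field_simp

lemma indep_prod_integral {Ω : Type*} [MeasurableSpace Ω] (P : Measure Ω) [IsProbabilityMeasure P]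
    (n : ℕ) (X ε Z : Fin n → Ω → ℝ)
    (hXmeas : ∀ i, Measurable (X i)) (hεmeas : ∀ i, Measurable (ε i))
    (hZmeas : ∀ i, Measurable (Z i))
    (hindep : iIndepFun
      (Sum.elim X (Sum.elim ε Z) : (Fin n ⊕ (Fin n ⊕ Fin n)) → Ω → ℝ) P)
    (t : ℝ) (s : Finset (Fin n)) :
    ∫ ω, ∏ i ∈ s, Real.exp (-(t * (ε i ω * X i ω + Z i ω)^2)) ∂P
      = ∏ i ∈ s, ∫ ω, Real.exp (-(t * (ε i ω * X i ω + Z i ω)^2)) ∂P := by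
  classical
  set W : (Fin n ⊕ (Fin n ⊕ Fin n)) → Ω → ℝ := Sum.elim X (Sum.elim ε Z) with hW
  have hWmeas : ∀ j, Measurable (W j) := by
    rintro (j | j | j)
    · exact hXmeas j
    · exact hεmeas j
    · exact hZmeas j
  set g : Fin n → Ω → ℝ := fun i ω => Real.exp (-(t * (ε i ω * X i ω + Z i ω)^2)) with hg
  have hgmeas : ∀ i, Measurable (g i) := by
    intro i
    exact (((((hεmeas i).mul (hXmeas i)).add (hZmeas i)).pow_const 2).const_mul t).neg.exp
  induction s using Finset.induction with
  | empty => simp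
  | @insert a s ha ih =>
    have hSa : ∀ x ∈ ({Sum.inl a, Sum.inr (Sum.inl a), Sum.inr (Sum.inr a)} :
        Finset (Fin n ⊕ (Fin n ⊕ Fin n))), x ∉ s.biUnion
          (fun i => {Sum.inl i, Sum.inr (Sum.inl i), Sum.inr (Sum.inr i)}) := by
      intro x hx hx'
      simp only [Finset.mem_biUnion, Finset.mem_insert, Finset.mem_singleton] at hx hx'
      obtain ⟨i, hi, hxi⟩ := hx'
      rcases hx with rfl | rfl | rfl <;> rcases hxi with h | h | h <;>
        simp_all <;> exact ha (h ▸ hi)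
    have hdisj : Disjoint ({Sum.inl a, Sum.inr (Sum.inl a), Sum.inr (Sum.inr a)} :
        Finset (Fin n ⊕ (Fin n ⊕ Fin n)))
        (s.biUnion (fun i => {Sum.inl i, Sum.inr (Sum.inl i), Sum.inr (Sum.inr i)})) :=
      Finset.disjoint_left.2 (fun {x} hx => hSa x hx)
    have hbase := hindep.indepFun_finset _ _ hdisj hWmeas
    have hma : ∀ (i : Fin n), Sum.inl i ∈ ({Sum.inl i, Sum.inr (Sum.inl i), Sum.inr (Sum.inr i)} :
        Finset (Fin n ⊕ (Fin n ⊕ Fin n))) := by intro i; simp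
    have hmb : ∀ (i : Fin n), Sum.inr (Sum.inl i) ∈
        ({Sum.inl i, Sum.inr (Sum.inl i), Sum.inr (Sum.inr i)} :
        Finset (Fin n ⊕ (Fin n ⊕ Fin n))) := by intro i; simp
    have hmc : ∀ (i : Fin n), Sum.inr (Sum.inr i) ∈
        ({Sum.inl i, Sum.inr (Sum.inl i), Sum.inr (Sum.inr i)} :
        Finset (Fin n ⊕ (Fin n ⊕ Fin n))) := by intro i; simp
    set Sa : Finset (Fin n ⊕ (Fin n ⊕ Fin n)) :=
      {Sum.inl a, Sum.inr (Sum.inl a), Sum.inr (Sum.inr a)} with hSadef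
    set Ts : Finset (Fin n ⊕ (Fin n ⊕ Fin n)) :=
      s.biUnion (fun i => {Sum.inl i, Sum.inr (Sum.inl i), Sum.inr (Sum.inr i)}) with hTsdef
    set φa : ((j : Sa) → ℝ) → ℝ := fun v =>
      Real.exp (-(t * (v ⟨Sum.inr (Sum.inl a), hmb a⟩ * v ⟨Sum.inl a, hma a⟩
        + v ⟨Sum.inr (Sum.inr a), hmc a⟩)^2)) with hφa
    have hφameas : Measurable φa := by fun_prop
    set ψ : ((j : Ts) → ℝ) → ℝ := fun v =>
      ∏ i ∈ s.attach, Real.exp (-(t * (v ⟨Sum.inr (Sum.inl i.1),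
          Finset.mem_biUnion.2 ⟨i.1, i.2, hmb i.1⟩⟩
        * v ⟨Sum.inl i.1, Finset.mem_biUnion.2 ⟨i.1, i.2, hma i.1⟩⟩
        + v ⟨Sum.inr (Sum.inr i.1), Finset.mem_biUnion.2 ⟨i.1, i.2, hmc i.1⟩⟩)^2)) with hψ
    have hψmeas : Measurable ψ := by
      apply Finset.measurable_prod
      intro i _
      fun_prop
    have hcomp := hbase.comp hφameas hψmeas
    have e1 : (φa ∘ fun ω (j : Sa) => W j.1 ω) = g a := rfl
    have e2 : (ψ ∘ fun ω (j : Ts) => W j.1 ω) = fun ω => ∏ i ∈ s, g i ω := by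
      funext ω
      exact Finset.prod_attach s (fun i => g i ω)
    rw [e1, e2] at hcomp
    have hint := hcomp.integral_mul_eq_mul_integral
      (hgmeas a).aestronglyMeasurable
      (Finset.measurable_prod s (fun i _ => hgmeas i)).aestronglyMeasurable
    rw [Finset.prod_insert ha]
    simp only [Finset.prod_insert ha]
    rw [show (∫ ω, g a ω * ∏ i ∈ s, g i ω ∂P)
        = ∫ ω, (g a * fun ω => ∏ i ∈ s, g i ω) ω ∂P from rfl, hint, ih]

lemma per_term {Ω : Type*} [MeasurableSpace Ω] (P : Measure Ω) [IsProbabilityMeasure P]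
    (U Z : Ω → ℝ) (hU : Measurable U) (hZ : Measurable Z)
    (hind : IndepFun U Z P) (v : ℝ≥0) (hv : 0 < (v:ℝ))
    (hmap : Measure.map Z P = gaussianReal 0 v)
    (t : ℝ) (ht : 0 < t) :
    ∫ ω, Real.exp (-(t * (U ω + Z ω) ^ 2)) ∂P
      = ∫ ω, Real.exp (-(t * (U ω) ^ 2) / (1 + 2 * t * v)) / Real.sqrt (1 + 2 * t * v) ∂P := by
  have hv0 : v ≠ 0 := by intro h; rw [h] at hv; simp at hv
  haveI : IsProbabilityMeasure (gaussianReal 0 v) := inferInstance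
  have hpair : Measure.map (fun ω => (U ω, Z ω)) P
      = (Measure.map U P).prod (Measure.map Z P) :=
    (indepFun_iff_map_prod_eq_prod_map_map hU.aemeasurable hZ.aemeasurable).1 hind
  haveI : IsProbabilityMeasure (Measure.map U P) := Measure.isProbabilityMeasure_map hU.aemeasurable
  have hFmeas : Measurable (fun p : ℝ × ℝ => Real.exp (-(t * (p.1 + p.2) ^ 2))) := by fun_prop
  have hint : Integrable (fun p : ℝ × ℝ => Real.exp (-(t * (p.1 + p.2) ^ 2)))
      ((Measure.map U P).prod (gaussianReal 0 v)) := by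
    refine Integrable.mono' (integrable_const 1) hFmeas.aestronglyMeasurable ?_
    refine ae_of_all _ fun p => ?_
    rw [Real.norm_eq_abs, abs_of_pos (Real.exp_pos _)]
    apply Real.exp_le_one_iff.2
    have : 0 ≤ t * (p.1 + p.2) ^ 2 := by positivity
    linarith
  have hGmeas : Measurable (fun u : ℝ =>
      Real.exp (-(t * u ^ 2) / (1 + 2 * t * v)) / Real.sqrt (1 + 2 * t * v)) := by fun_prop
  calc ∫ ω, Real.exp (-(t * (U ω + Z ω) ^ 2)) ∂P
      = ∫ p : ℝ × ℝ, Real.exp (-(t * (p.1 + p.2) ^ 2)) ∂(Measure.map (fun ω => (U ω, Z ω)) P) :=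
        (integral_map (hU.prodMk hZ).aemeasurable hFmeas.aestronglyMeasurable).symm
    _ = ∫ p : ℝ × ℝ, Real.exp (-(t * (p.1 + p.2) ^ 2))
          ∂((Measure.map U P).prod (gaussianReal 0 v)) := by rw [hpair, hmap]
    _ = ∫ u, ∫ z, Real.exp (-(t * (u + z) ^ 2)) ∂(gaussianReal 0 v) ∂(Measure.map U P) :=
        integral_prod _ hint
    _ = ∫ u, Real.exp (-(t * u ^ 2) / (1 + 2 * t * v)) / Real.sqrt (1 + 2 * t * v)
          ∂(Measure.map U P) := by
        apply integral_congr_ae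
        refine ae_of_all _ fun u => gauss_quad t ht u v hv
    _ = ∫ ω, Real.exp (-(t * (U ω) ^ 2) / (1 + 2 * t * v)) / Real.sqrt (1 + 2 * t * v) ∂P :=
        integral_map hU.aemeasurable hGmeas.aestronglyMeasurable

set_option maxHeartbeats 1000000 in
/-- Classical instantiation of Corollary 4.1: same setting as the missed-detection bound
but with `|Xᵢ| = σ̄_X` a.s.; the bound holds with `σ̄_X` in place of `σ̲_X`. -/
theorem missed_detection_bound_max_signal
    {Ω : Type*} [MeasurableSpace Ω] (P : Measure Ω) [IsProbabilityMeasure P]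
    (n : ℕ) (hn : 0 < n)
    (X ε Z : Fin n → Ω → ℝ)
    (hXmeas : ∀ i, Measurable (X i)) (hεmeas : ∀ i, Measurable (ε i))
    (hZmeas : ∀ i, Measurable (Z i))
    (hindep : iIndepFun
      (Sum.elim X (Sum.elim ε Z) : (Fin n ⊕ (Fin n ⊕ Fin n)) → Ω → ℝ) P)
    (σ : Fin n → ℝ) (σlow σup : ℝ) (hσlow : 0 < σlow) (hσle : σlow ≤ σup)
    (hσ : ∀ i, σlow ≤ σ i ∧ σ i ≤ σup)
    (hZ : ∀ i, Measure.map (Z i) P = gaussianReal 0 ⟨(σ i) ^ 2, sq_nonneg (σ i)⟩)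
    (hεpos : ∀ i, ∀ᵐ ω ∂P, 0 ≤ ε i ω)
    (hεid : ∀ i, Measure.map (ε i) P = Measure.map (ε ⟨0, hn⟩) P)
    (σX : ℝ) (hσX : 0 < σX)
    (hX : ∀ i, ∀ᵐ ω ∂P, |X i ω| = σX)
    (β lam : ℝ) (hβ : 0 < β) :
    P {ω | ∑ i, (ε i ω * X i ω + Z i ω) ^ 2 ≤ lam}
      ≤ ENNReal.ofReal
        (Real.exp (β * lam / (2 * σup ^ 2))
          * (1 + β) ^ (-(σlow ^ 2 / (2 * σup ^ 2)) * n)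
          * (∫ ω, Real.exp (-(β * (ε ⟨0, hn⟩ ω) ^ 2 * σX ^ 2)
              / (2 * σup ^ 2 * (1 + β))) ∂P) ^ n) := by
  classical
  have hσup : 0 < σup := lt_of_lt_of_le hσlow hσle
  set t : ℝ := β / (2 * σup ^ 2) with ht_def
  have ht : 0 < t := by positivity
  have h1β : (0:ℝ) < 1 + β := by linarith
  set ρ : ℝ := σlow ^ 2 / (2 * σup ^ 2) with hρ_def
  set ρb : ℝ := (1 + β) ^ (-ρ) with hρb_def
  have hρpos : 0 < ρ := by positivity
  have hρb_pos : 0 < ρb := Real.rpow_pos_of_pos h1β _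
  set D : ℝ → ℝ := fun x => Real.exp (-(β * x ^ 2 * σX ^ 2) / (2 * σup ^ 2 * (1 + β)))
    with hD_def
  have hDmeas : Measurable D := by fun_prop
  have hDle1 : ∀ x, D x ≤ 1 := by
    intro x
    apply Real.exp_le_one_iff.2
    apply div_nonpos_of_nonpos_of_nonneg
    · have : 0 ≤ β * x ^ 2 * σX ^ 2 := by positivity
      linarith
    · positivity
  have hD0 : ∀ x, 0 < D x := fun x => Real.exp_pos _
  set I : ℝ := ∫ ω, D (ε ⟨0, hn⟩ ω) ∂P with hI_def
  have hI_nonneg : 0 ≤ I := integral_nonneg fun ω => (hD0 _).le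
  set g : Fin n → Ω → ℝ := fun i ω => Real.exp (-(t * (ε i ω * X i ω + Z i ω) ^ 2)) with hg_def
  have hgmeas : ∀ i, Measurable (g i) := by
    intro i; fun_prop
  have hg01 : ∀ i ω, 0 < g i ω ∧ g i ω ≤ 1 := by
    intro i ω
    refine ⟨Real.exp_pos _, Real.exp_le_one_iff.2 ?_⟩
    have : 0 ≤ t * (ε i ω * X i ω + Z i ω) ^ 2 := by positivity
    linarith
  -- per-term bound
  have hterm : ∀ i, ∫ ω, g i ω ∂P ≤ ρb * I := by
    intro i
    have hσi_low : σlow ≤ σ i := (hσ i).1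
    have hσi_up : σ i ≤ σup := (hσ i).2
    have hσi : 0 < σ i := lt_of_lt_of_le hσlow hσi_low
    set v : ℝ≥0 := (⟨σ i ^ 2, sq_nonneg (σ i)⟩ : ℝ≥0) with hv_def
    have hvv : (v : ℝ) = σ i ^ 2 := rfl
    have hWmeas : ∀ j, Measurable ((Sum.elim X (Sum.elim ε Z) :
        (Fin n ⊕ (Fin n ⊕ Fin n)) → Ω → ℝ) j) := by
      rintro (j | j | j)
      · exact hXmeas j
      · exact hεmeas j
      · exact hZmeas j
    have hUZ : IndepFun (fun ω => ε i ω * X i ω) (Z i) P := by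
      have h3 := hindep.indepFun_prodMk hWmeas (Sum.inr (Sum.inl i)) (Sum.inl i)
        (Sum.inr (Sum.inr i)) (by simp) (by simp)
      exact h3.comp (measurable_fst.mul measurable_snd) measurable_id
    have heq := per_term P (fun ω => ε i ω * X i ω) (Z i)
      ((hεmeas i).mul (hXmeas i)) (hZmeas i) hUZ v (by rw [hvv]; positivity)
      (hZ i) t ht
    simp only [hvv] at heq
    set c : ℝ := 1 + 2 * t * σ i ^ 2 with hc_def
    have hc1 : (1:ℝ) ≤ c := by
      have : 0 ≤ 2 * t * σ i ^ 2 := by positivity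
      linarith
    have hc_pos : 0 < c := lt_of_lt_of_le one_pos hc1
    have hc_le : c ≤ 1 + β := by
      have hs : σ i ^ 2 ≤ σup ^ 2 := pow_le_pow_left₀ hσi.le hσi_up 2
      have he : 2 * t * σup ^ 2 = β := by rw [ht_def]; field_simp
      nlinarith [ht.le]
    have hc_ge : 1 + 2 * ρ * β ≤ c := by
      have h1 : σlow ^ 2 ≤ σ i ^ 2 := pow_le_pow_left₀ hσlow.le hσi_low 2
      have e1 : 2 * ρ * β = β * σlow ^ 2 / σup ^ 2 := by rw [hρ_def]; field_simp
      have e2 : 2 * t * σ i ^ 2 = β * σ i ^ 2 / σup ^ 2 := by rw [ht_def]; field_simp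
      have : 2 * ρ * β ≤ 2 * t * σ i ^ 2 := by
        rw [e1, e2]
        apply div_le_div_of_nonneg_right ?_ (by positivity)
        nlinarith
      linarith
    -- key: (sqrt c)⁻¹ ≤ ρb
    have hkey1 : (Real.sqrt c)⁻¹ ≤ ρb := by
      have h2ρ : 2 * ρ ≤ 1 := by
        have hs : σlow ^ 2 ≤ σup ^ 2 := pow_le_pow_left₀ hσlow.le hσle 2
        have e : 2 * ρ = σlow ^ 2 / σup ^ 2 := by rw [hρ_def]; field_simp
        rw [e, div_le_one (by positivity)]
        exact hs
      have hbern : (1 + β) ^ (2 * ρ) ≤ 1 + 2 * ρ * β :=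
        rpow_one_add_le_one_add_mul_self (s := β) (by linarith) (by positivity) h2ρ
      have hpow : (1 + β) ^ ρ ≤ Real.sqrt c := by
        have h2 : ((1 + β) ^ ρ) ^ 2 ≤ c := by
          calc ((1 + β) ^ ρ) ^ 2 = (1 + β) ^ (2 * ρ) := by
                rw [← Real.rpow_natCast ((1+β) ^ ρ) 2, ← Real.rpow_mul h1β.le]
                norm_num
                rw [mul_comm]
            _ ≤ 1 + 2 * ρ * β := hbern
            _ ≤ c := hc_ge
        calc (1 + β) ^ ρ = Real.sqrt (((1 + β) ^ ρ) ^ 2) :=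
              (Real.sqrt_sq (Real.rpow_nonneg h1β.le _)).symm
          _ ≤ Real.sqrt c := Real.sqrt_le_sqrt h2
      rw [hρb_def, Real.rpow_neg h1β.le]
      exact inv_anti₀ (Real.rpow_pos_of_pos h1β _) hpow
    -- pointwise a.e. bound
    have hae : ∀ᵐ ω ∂P,
        Real.exp (-(t * (ε i ω * X i ω) ^ 2) / c) / Real.sqrt c ≤ ρb * D (ε i ω) := by
      filter_upwards [hX i] with ω hXω
      have hu2 : (ε i ω * X i ω) ^ 2 = (ε i ω) ^ 2 * σX ^ 2 := by
        rw [mul_pow, ← sq_abs (X i ω), hXω]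
      have hexp : Real.exp (-(t * (ε i ω * X i ω) ^ 2) / c) ≤ D (ε i ω) := by
        apply Real.exp_le_exp.2
        rw [hu2]
        have hA : 0 ≤ t * ((ε i ω) ^ 2 * σX ^ 2) := by positivity
        have hdiv : t * ((ε i ω) ^ 2 * σX ^ 2) / (1 + β) ≤ t * ((ε i ω) ^ 2 * σX ^ 2) / c := by
          apply div_le_div_of_nonneg_left hA hc_pos hc_le
        have heqRHS : -(β * (ε i ω) ^ 2 * σX ^ 2) / (2 * σup ^ 2 * (1 + β))
            = -(t * ((ε i ω) ^ 2 * σX ^ 2) / (1 + β)) := by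
          rw [ht_def]; field_simp
        show -(t * (ε i ω ^ 2 * σX ^ 2)) / c ≤ -(β * ε i ω ^ 2 * σX ^ 2) / (2 * σup ^ 2 * (1 + β))
        rw [heqRHS, neg_div]
        linarith
      have h1 : 0 < Real.sqrt c := Real.sqrt_pos.2 hc_pos
      rw [div_eq_mul_inv, mul_comm ρb (D (ε i ω))]
      apply mul_le_mul hexp hkey1 (by positivity) (hD0 _).le
    -- integrate
    have hint1 : Integrable (fun ω => Real.exp (-(t * (ε i ω * X i ω) ^ 2) / c)
        / Real.sqrt c) P := by
      apply Integrable.mono' (integrable_const ((Real.sqrt c)⁻¹))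
      · apply Measurable.aestronglyMeasurable; fun_prop
      · refine ae_of_all _ fun ω => ?_
        rw [Real.norm_eq_abs, abs_div, abs_of_pos (Real.exp_pos _),
          abs_of_pos (Real.sqrt_pos.2 hc_pos), div_eq_mul_inv]
        have : Real.exp (-(t * (ε i ω * X i ω) ^ 2) / c) ≤ 1 := by
          apply Real.exp_le_one_iff.2
          apply div_nonpos_of_nonpos_of_nonneg _ hc_pos.le
          have : 0 ≤ t * (ε i ω * X i ω) ^ 2 := by positivity
          linarith
        nlinarith [inv_nonneg.2 (Real.sqrt_nonneg c)]
    have hint2 : Integrable (fun ω => D (ε i ω)) P := by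
      apply Integrable.mono' (integrable_const 1)
      · exact (hDmeas.comp (hεmeas i)).aestronglyMeasurable
      · refine ae_of_all _ fun ω => ?_
        rw [Real.norm_eq_abs, abs_of_pos (hD0 _)]
        exact hDle1 _
    calc ∫ ω, g i ω ∂P
        = ∫ ω, Real.exp (-(t * (ε i ω * X i ω) ^ 2) / c) / Real.sqrt c ∂P := heq
      _ ≤ ∫ ω, ρb * D (ε i ω) ∂P := integral_mono_ae hint1 (hint2.const_mul ρb) hae
      _ = ρb * ∫ ω, D (ε i ω) ∂P := integral_const_mul ρb _
      _ = ρb * I := by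
          congr 1
          rw [hI_def]
          calc ∫ ω, D (ε i ω) ∂P
              = ∫ x, D x ∂(Measure.map (ε i) P) :=
                (integral_map (hεmeas i).aemeasurable hDmeas.aestronglyMeasurable).symm
            _ = ∫ x, D x ∂(Measure.map (ε ⟨0, hn⟩) P) := by rw [hεid i]
            _ = ∫ ω, D (ε ⟨0, hn⟩ ω) ∂P :=
                integral_map (hεmeas _).aemeasurable hDmeas.aestronglyMeasurable
  -- product
  set f : Ω → ℝ := fun ω => ∏ i, g i ω with hf_def
  have hfmeas : Measurable f := Finset.measurable_prod _ (fun i _ => hgmeas i)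
  have hf_nonneg : ∀ ω, 0 ≤ f ω := fun ω => Finset.prod_nonneg fun i _ => (hg01 i ω).1.le
  have hf_le1 : ∀ ω, f ω ≤ 1 := fun ω =>
    Finset.prod_le_one (fun i _ => (hg01 i ω).1.le) (fun i _ => (hg01 i ω).2)
  have hf_int : Integrable f P := by
    apply Integrable.mono' (integrable_const 1) hfmeas.aestronglyMeasurable
    refine ae_of_all _ fun ω => ?_
    rw [Real.norm_eq_abs, abs_of_nonneg (hf_nonneg ω)]
    exact hf_le1 ω
  -- identify set
  have hset : {ω | ∑ i, (ε i ω * X i ω + Z i ω) ^ 2 ≤ lam}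
      = {ω | Real.exp (-(t * lam)) ≤ f ω} := by
    ext ω
    simp only [Set.mem_setOf_eq]
    have hfω : f ω = Real.exp (-(t * ∑ i, (ε i ω * X i ω + Z i ω) ^ 2)) := by
      rw [hf_def]
      simp only [hg_def]
      rw [← Real.exp_sum]
      congr 1
      rw [Finset.mul_sum, ← Finset.sum_neg_distrib]
    rw [hfω, Real.exp_le_exp, neg_le_neg_iff]
    constructor
    · intro h; exact mul_le_mul_of_nonneg_left h ht.le
    · intro h; exact le_of_mul_le_mul_left (by linarith [h]) ht
  -- Markov
  have hmarkov := mul_meas_ge_le_integral_of_nonneg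
    (ae_of_all P hf_nonneg) hf_int (Real.exp (-(t * lam)))
  rw [← hset] at hmarkov
  have hPA : (P {ω | ∑ i, (ε i ω * X i ω + Z i ω) ^ 2 ≤ lam}).toReal
      ≤ Real.exp (t * lam) * ∫ ω, f ω ∂P := by
    have hee : Real.exp (t * lam) * Real.exp (-(t * lam)) = 1 := by
      rw [← Real.exp_add]; simp
    calc (P {ω | ∑ i, (ε i ω * X i ω + Z i ω) ^ 2 ≤ lam}).toReal
        = Real.exp (t * lam) * (Real.exp (-(t * lam))
            * (P {ω | ∑ i, (ε i ω * X i ω + Z i ω) ^ 2 ≤ lam}).toReal) := by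
          rw [← mul_assoc, hee, one_mul]
      _ ≤ Real.exp (t * lam) * ∫ ω, f ω ∂P :=
          mul_le_mul_of_nonneg_left hmarkov (Real.exp_pos _).le
  -- product identity
  have hprod : ∫ ω, f ω ∂P = ∏ i, ∫ ω, g i ω ∂P := by
    rw [hf_def]
    exact indep_prod_integral P n X ε Z hXmeas hεmeas hZmeas hindep t Finset.univ
  have hfinal : (P {ω | ∑ i, (ε i ω * X i ω + Z i ω) ^ 2 ≤ lam}).toReal
      ≤ Real.exp (β * lam / (2 * σup ^ 2)) * (1 + β) ^ (-ρ * n) * I ^ n := by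
    have h2 : ∏ i, ∫ ω, g i ω ∂P ≤ (ρb * I) ^ n := by
      calc ∏ i, ∫ ω, g i ω ∂P ≤ ∏ _i : Fin n, (ρb * I) :=
            Finset.prod_le_prod (fun i _ => integral_nonneg fun ω => (hg01 i ω).1.le)
              (fun i _ => hterm i)
        _ = (ρb * I) ^ n := by rw [Finset.prod_const, Finset.card_univ, Fintype.card_fin]
    have h3 : (ρb * I) ^ n = (1 + β) ^ (-ρ * n) * I ^ n := by
      rw [mul_pow, hρb_def]
      congr 1
      rw [← Real.rpow_natCast ((1 + β) ^ (-ρ)) n, ← Real.rpow_mul h1β.le]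
    have hexpeq : Real.exp (t * lam) = Real.exp (β * lam / (2 * σup ^ 2)) := by
      rw [ht_def]; congr 1; ring
    calc (P {ω | ∑ i, (ε i ω * X i ω + Z i ω) ^ 2 ≤ lam}).toReal
        ≤ Real.exp (t * lam) * ∫ ω, f ω ∂P := hPA
      _ = Real.exp (t * lam) * ∏ i, ∫ ω, g i ω ∂P := by rw [hprod]
      _ ≤ Real.exp (t * lam) * ((ρb * I) ^ n) :=
          mul_le_mul_of_nonneg_left h2 (Real.exp_pos _).le
      _ = Real.exp (β * lam / (2 * σup ^ 2)) * (1 + β) ^ (-ρ * n) * I ^ n := by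
          rw [h3, hexpeq, mul_assoc]
  calc P {ω | ∑ i, (ε i ω * X i ω + Z i ω) ^ 2 ≤ lam}
      = ENNReal.ofReal ((P {ω | ∑ i, (ε i ω * X i ω + Z i ω) ^ 2 ≤ lam}).toReal) :=
        (ENNReal.ofReal_toReal (measure_ne_top P _)).symm
    _ ≤ ENNReal.ofReal (Real.exp (β * lam / (2 * σup ^ 2))
          * (1 + β) ^ (-ρ * n) * I ^ n) := ENNReal.ofReal_le_ofReal hfinal
end

section
/- (Example 4.2, Rayleigh fading: limits of k_β and existence of a valid β.) Let 0 < σ̲ ≤ σ̄, σ > 0, σ̲_X > 0, and for β > 0 define k_β := (2σ̄²/β)·ln( (β(σ²σ̲_X² + σ̄²) + σ̄²)/(βσ̄² + σ̄²) ) + (σ̲²/β)·ln(1+β). Then k_β → 2σ̲_X²σ² + σ̲² as β → 0⁺ and k_β → 0 as β → ∞. Moreover, if 2σ̲_X²σ² + σ̲² > σ̄², then there exists β > 0 such that k_β > σ̄² and 1/2 − (1/2)·ln(σ̄²/k_β) − k_β/(2σ̄²) < 0. -/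
open Real Filter Set Topology Asymptotics

/-- Example 4.2 (Rayleigh fading): with
`k_β = (2σ̄²/β)·ln((β(σ²σ̲_X²+σ̄²)+σ̄²)/(βσ̄²+σ̄²)) + (σ̲²/β)·ln(1+β)`,
one has `k_β → 2σ̲_X²σ² + σ̲²` as `β → 0⁺`, `k_β → 0` as `β → ∞`, and if
`2σ̲_X²σ² + σ̲² > σ̄²` then some `β > 0` satisfies `k_β > σ̄²` and
`1/2 − (1/2)·ln(σ̄²/k_β) − k_β/(2σ̄²) < 0`. -/
theorem rayleigh_fading_kbeta
    (σlow σup σ σX : ℝ) (hσlow : 0 < σlow) (hσle : σlow ≤ σup)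
    (hσ : 0 < σ) (hσX : 0 < σX)
    (k : ℝ → ℝ)
    (hk : ∀ β, k β = (2 * σup ^ 2 / β)
        * Real.log ((β * (σ ^ 2 * σX ^ 2 + σup ^ 2) + σup ^ 2) / (β * σup ^ 2 + σup ^ 2))
      + (σlow ^ 2 / β) * Real.log (1 + β)) :
    Tendsto k (nhdsWithin 0 (Ioi 0)) (nhds (2 * σX ^ 2 * σ ^ 2 + σlow ^ 2)) ∧
    Tendsto k atTop (nhds 0) ∧
    (σup ^ 2 < 2 * σX ^ 2 * σ ^ 2 + σlow ^ 2 →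
      ∃ β : ℝ, 0 < β ∧ σup ^ 2 < k β ∧
        1 / 2 - (1 / 2) * Real.log (σup ^ 2 / k β) - k β / (2 * σup ^ 2) < 0) := by
  have hup : 0 < σup := lt_of_lt_of_le hσlow hσle
  have hs : 0 < σup ^ 2 := by positivity
  set s : ℝ := σup ^ 2 with hsdef
  set A : ℝ := σ ^ 2 * σX ^ 2 with hAdef
  have hApos : 0 < A := by positivity
  -- limit at 0+
  have h1 : Tendsto k (nhdsWithin 0 (Ioi 0)) (nhds (2 * σX ^ 2 * σ ^ 2 + σlow ^ 2)) := by
    have lin1 : HasDerivAt (fun β : ℝ => β * (A + s) + s) (A + s) 0 := by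
      simpa using ((hasDerivAt_id (0 : ℝ)).mul_const (A + s)).add_const s
    have d1 : HasDerivAt (fun β : ℝ => Real.log (β * (A + s) + s)) ((A + s) / s) 0 := by
      have := lin1.log (by simp; positivity)
      simpa using this
    have lin2 : HasDerivAt (fun β : ℝ => β * s + s) s 0 := by
      simpa using ((hasDerivAt_id (0 : ℝ)).mul_const s).add_const s
    have d2 : HasDerivAt (fun β : ℝ => Real.log (β * s + s)) 1 0 := by
      have := lin2.log (by simpa using hs.ne')
      simpa [div_self hs.ne'] using this
    have lin3 : HasDerivAt (fun β : ℝ => 1 + β) 1 0 := by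
      simpa using (hasDerivAt_id (0 : ℝ)).const_add 1
    have d3 : HasDerivAt (fun β : ℝ => Real.log (1 + β)) 1 0 := by
      have := lin3.log (by norm_num)
      simpa using this
    have t1 := hasDerivAt_iff_tendsto_slope.mp d1
    have t2 := hasDerivAt_iff_tendsto_slope.mp d2
    have t3 := hasDerivAt_iff_tendsto_slope.mp d3
    have hmono : 𝓝[>] (0:ℝ) ≤ 𝓝[≠] (0:ℝ) :=
      nhdsWithin_mono 0 (fun x hx => ne_of_gt hx)
    have t1' := t1.mono_left hmono
    have t2' := t2.mono_left hmono
    have t3' := t3.mono_left hmono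
    have comb : Tendsto
        (fun β => 2 * s * (slope (fun β : ℝ => Real.log (β * (A + s) + s)) 0 β
            - slope (fun β : ℝ => Real.log (β * s + s)) 0 β)
          + σlow ^ 2 * slope (fun β : ℝ => Real.log (1 + β)) 0 β)
        (𝓝[>] 0) (𝓝 (2 * s * ((A + s) / s - 1) + σlow ^ 2 * 1)) :=
      ((tendsto_const_nhds.mul (t1'.sub t2')).add (tendsto_const_nhds.mul t3'))
    have heq : ∀ᶠ β in 𝓝[>] (0:ℝ),
        2 * s * (slope (fun β : ℝ => Real.log (β * (A + s) + s)) 0 β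
            - slope (fun β : ℝ => Real.log (β * s + s)) 0 β)
          + σlow ^ 2 * slope (fun β : ℝ => Real.log (1 + β)) 0 β = k β := by
      filter_upwards [self_mem_nhdsWithin] with β (hβ : 0 < β)
      have hb1 : 0 < β * (A + s) + s := by positivity
      have hb2 : 0 < β * s + s := by positivity
      rw [hk β, slope_def_field, slope_def_field, slope_def_field]
      rw [Real.log_div hb1.ne' hb2.ne']
      simp only [zero_mul, zero_add, Real.log_one, add_zero, sub_zero]
      field_simp
      ring
    have hfin := comb.congr' heq
    have hval : 2 * s * ((A + s) / s - 1) + σlow ^ 2 * 1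
        = 2 * σX ^ 2 * σ ^ 2 + σlow ^ 2 := by
      field_simp
      ring
    rwa [hval] at hfin
  refine ⟨h1, ?_, ?_⟩
  · -- limit at atTop
    have hratio : Tendsto (fun β : ℝ => (β * (A + s) + s) / (β * s + s)) atTop
        (𝓝 ((A + s) / s)) := by
      have hre : ∀ᶠ β in atTop, ((A + s) + s / β) / (s + s / β)
          = (β * (A + s) + s) / (β * s + s) := by
        filter_upwards [eventually_gt_atTop (0:ℝ)] with β hβ
        rw [div_eq_div_iff (by positivity) (by positivity)]
        field_simp
      have num : Tendsto (fun β : ℝ => (A + s) + s / β) atTop (𝓝 ((A + s) + 0)) :=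
        tendsto_const_nhds.add (tendsto_const_nhds.div_atTop tendsto_id)
      have den : Tendsto (fun β : ℝ => s + s / β) atTop (𝓝 (s + 0)) :=
        tendsto_const_nhds.add (tendsto_const_nhds.div_atTop tendsto_id)
      have := (num.div den (by simpa using hs.ne')).congr' hre
      simpa using this
    have term1 : Tendsto (fun β : ℝ => (2 * s / β)
        * Real.log ((β * (A + s) + s) / (β * s + s))) atTop (𝓝 0) := by
      have hc : Tendsto (fun β : ℝ => 2 * s / β) atTop (𝓝 0) :=
        tendsto_const_nhds.div_atTop tendsto_id
      have hl : Tendsto (fun β : ℝ => Real.log ((β * (A + s) + s) / (β * s + s)))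
          atTop (𝓝 (Real.log ((A + s) / s))) :=
        hratio.log (by positivity)
      simpa using hc.mul hl
    have hlog : Tendsto (fun β : ℝ => Real.log (1 + β) / β) atTop (𝓝 0) := by
      have h1o : (fun β : ℝ => Real.log (1 + β)) =o[atTop] (fun β : ℝ => 1 + β) := by
        have := Real.isLittleO_log_id_atTop.comp_tendsto
          (tendsto_atTop_add_const_left atTop 1 tendsto_id)
        simpa [Function.comp_def] using this
      have hO : (fun β : ℝ => 1 + β) =O[atTop] (fun β : ℝ => β) := by
        apply Asymptotics.IsBigO.of_bound 2
        filter_upwards [eventually_ge_atTop (1:ℝ)] with β hβ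
        rw [Real.norm_eq_abs, Real.norm_eq_abs, abs_of_pos (by linarith : (0:ℝ) < 1 + β),
          abs_of_pos (by linarith : (0:ℝ) < β)]
        linarith
      exact (h1o.trans_isBigO hO).tendsto_div_nhds_zero
    have term2 : Tendsto (fun β : ℝ => (σlow ^ 2 / β) * Real.log (1 + β)) atTop (𝓝 0) := by
      have := hlog.const_mul (σlow ^ 2)
      simp only [mul_zero] at this
      exact this.congr (fun β => by ring)
    have hsum := term1.add term2
    simp only [add_zero] at hsum
    exact hsum.congr (fun β => (hk β).symm)
  · -- existence of β
    intro hlt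
    have hev : ∀ᶠ β in 𝓝[>] (0:ℝ), s < k β :=
      h1.eventually (eventually_gt_nhds hlt)
    obtain ⟨β, hβks, hβpos⟩ := (hev.and self_mem_nhdsWithin).exists
    refine ⟨β, hβpos, hβks, ?_⟩
    have hkpos : 0 < k β := lt_trans hs hβks
    have ht : k β / s ≠ 1 := by
      have : 1 < k β / s := (one_lt_div hs).mpr hβks
      exact ne_of_gt this
    have hlog := Real.log_lt_sub_one_of_pos (by positivity : 0 < k β / s) ht
    rw [Real.log_div hkpos.ne' hs.ne'] at hlog
    rw [Real.log_div hs.ne' hkpos.ne']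
    have h2 : k β / (2 * s) = (k β / s) / 2 := by ring
    rw [h2]
    linarith
end

section
/- (Example 4.3, Rician fading: limits of k_β and existence of a valid β.) Let 0 < σ̲ ≤ σ̄, σ > 0, v ≥ 0, σ̲_X > 0. For β > 0 set A_β := βσ̲_X²/(2σ̄²(1+β)) and k_β := (2σ̄²/β)·( ln(2σ²A_β + 1) + A_β v²/(2σ²A_β + 1) ) + (σ̲²/β)·ln(1+β). Then k_β → 2σ²σ̲_X² + v²σ̲_X² + σ̲² as β → 0⁺ and k_β → 0 as β → ∞. Moreover, if 2σ²σ̲_X² + v²σ̲_X² + σ̲² > σ̄², then there exists β > 0 such that k_β > σ̄² and 1/2 − (1/2)·ln(σ̄²/k_β) − k_β/(2σ̄²) < 0. -/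
open Real Filter Set

/-- Example 4.3 (Rician fading): with `A_β = βσ̲_X²/(2σ̄²(1+β))` and
`k_β = (2σ̄²/β)·(ln(2σ²A_β+1) + A_βv²/(2σ²A_β+1)) + (σ̲²/β)·ln(1+β)`,
one has `k_β → 2σ²σ̲_X² + v²σ̲_X² + σ̲²` as `β → 0⁺`, `k_β → 0` as `β → ∞`, and if
`2σ²σ̲_X² + v²σ̲_X² + σ̲² > σ̄²` then some `β > 0` satisfies `k_β > σ̄²` and
`1/2 − (1/2)·ln(σ̄²/k_β) − k_β/(2σ̄²) < 0`. -/
theorem rician_fading_kbeta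
    (σlow σup σ v σX : ℝ) (hσlow : 0 < σlow) (hσle : σlow ≤ σup)
    (hσ : 0 < σ) (hv : 0 ≤ v) (hσX : 0 < σX)
    (A : ℝ → ℝ) (hA : ∀ β, A β = β * σX ^ 2 / (2 * σup ^ 2 * (1 + β)))
    (k : ℝ → ℝ)
    (hk : ∀ β, k β = (2 * σup ^ 2 / β)
        * (Real.log (2 * σ ^ 2 * A β + 1) + A β * v ^ 2 / (2 * σ ^ 2 * A β + 1))
      + (σlow ^ 2 / β) * Real.log (1 + β)) :
    Tendsto k (nhdsWithin 0 (Ioi 0))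
      (nhds (2 * σ ^ 2 * σX ^ 2 + v ^ 2 * σX ^ 2 + σlow ^ 2)) ∧
    Tendsto k atTop (nhds 0) ∧
    (σup ^ 2 < 2 * σ ^ 2 * σX ^ 2 + v ^ 2 * σX ^ 2 + σlow ^ 2 →
      ∃ β : ℝ, 0 < β ∧ σup ^ 2 < k β ∧
        1 / 2 - (1 / 2) * Real.log (σup ^ 2 / k β) - k β / (2 * σup ^ 2) < 0) := by
  have hσup : 0 < σup := lt_of_lt_of_le hσlow hσle
  have hσup2 : (0:ℝ) < σup ^ 2 := by positivity
  set a : ℝ := σX ^ 2 / (2 * σup ^ 2) with ha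
  have hapos : 0 < a := by rw [ha]; positivity
  set L : ℝ := 2 * σ ^ 2 * σX ^ 2 + v ^ 2 * σX ^ 2 + σlow ^ 2 with hL
  set g : ℝ → ℝ := fun β => 2 * σup ^ 2 *
      (Real.log (2 * σ ^ 2 * A β + 1) + A β * v ^ 2 / (2 * σ ^ 2 * A β + 1))
    + σlow ^ 2 * Real.log (1 + β) with hg
  have hA0 : A 0 = 0 := by rw [hA]; ring
  have hg0 : g 0 = 0 := by simp [hg, hA0]
  have hAfun : A = fun β => β * σX ^ 2 / (2 * σup ^ 2 * (1 + β)) := funext hA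
  have hDA : HasDerivAt A a 0 := by
    rw [hAfun]
    have hN : HasDerivAt (fun β : ℝ => β * σX ^ 2) (σX ^ 2) 0 := by
      simpa using (hasDerivAt_id (0:ℝ)).mul_const (σX ^ 2)
    have hD : HasDerivAt (fun β : ℝ => 2 * σup ^ 2 * (1 + β)) (2 * σup ^ 2) 0 := by
      simpa using ((hasDerivAt_id (0:ℝ)).const_add 1).const_mul (2 * σup ^ 2)
    have hD0 : 2 * σup ^ 2 * (1 + (0:ℝ)) ≠ 0 := by positivity
    have h := hN.div hD hD0
    refine h.congr_deriv ?_
    rw [ha]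
    field_simp
    ring
  have hu : HasDerivAt (fun β => 2 * σ ^ 2 * A β + 1) (2 * σ ^ 2 * a) 0 :=
    (hDA.const_mul (2 * σ ^ 2)).add_const 1
  have hu0 : 2 * σ ^ 2 * A 0 + 1 = 1 := by rw [hA0]; ring
  have hlog1 : HasDerivAt (fun β => Real.log (2 * σ ^ 2 * A β + 1)) (2 * σ ^ 2 * a) 0 := by
    have h := hu.log (by rw [hu0]; norm_num)
    simpa [hu0] using h
  have hq : HasDerivAt (fun β => A β * v ^ 2 / (2 * σ ^ 2 * A β + 1)) (a * v ^ 2) 0 := by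
    have h := (hDA.mul_const (v ^ 2)).div hu (by rw [hu0]; norm_num)
    refine h.congr_deriv ?_
    rw [hA0]
    norm_num
  have hlog2 : HasDerivAt (fun β : ℝ => Real.log (1 + β)) 1 0 := by
    have h := ((hasDerivAt_id (0:ℝ)).const_add 1).log (by norm_num)
    simpa using h
  have hDg : HasDerivAt g L 0 := by
    have h := ((hlog1.add hq).const_mul (2 * σup ^ 2)).add (hlog2.const_mul (σlow ^ 2))
    refine h.congr_deriv ?_
    rw [hL, ha]
    field_simp
  have h1 : Tendsto k (nhdsWithin 0 (Ioi 0)) (nhds L) := by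
    have hs := hasDerivAt_iff_tendsto_slope.mp hDg
    have hs' : Tendsto (slope g 0) (nhdsWithin 0 (Ioi 0)) (nhds L) :=
      hs.mono_left (nhdsWithin_mono 0 (fun x hx => ne_of_gt hx))
    refine hs'.congr' ?_
    filter_upwards [self_mem_nhdsWithin] with β hβ
    rw [slope_def_field, hg0, hk β]
    simp only [hg]
    field_simp
    simp only [sub_zero]
  -- part 2
  have hAlim : Tendsto A atTop (nhds a) := by
    have hbase : Tendsto (fun β : ℝ => σX ^ 2 / (2 * σup ^ 2 * (β⁻¹ + 1))) atTop (nhds a) := by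
      have h1 : Tendsto (fun β : ℝ => 2 * σup ^ 2 * (β⁻¹ + 1)) atTop (nhds (2 * σup ^ 2 * (0 + 1))) :=
        ((tendsto_inv_atTop_zero.add tendsto_const_nhds).const_mul _)
      have h2 : Tendsto (fun β : ℝ => σX ^ 2 / (2 * σup ^ 2 * (β⁻¹ + 1))) atTop
          (nhds (σX ^ 2 / (2 * σup ^ 2 * ((0:ℝ) + 1)))) :=
        Tendsto.div tendsto_const_nhds h1 (by norm_num; positivity)
      simpa [ha] using h2
    refine hbase.congr' ?_
    filter_upwards [eventually_gt_atTop (0:ℝ)] with β hβ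
    rw [hA β]
    field_simp
  have hua : (0:ℝ) < 2 * σ ^ 2 * a + 1 := by positivity
  have hbracket : Tendsto (fun β => Real.log (2 * σ ^ 2 * A β + 1) + A β * v ^ 2 / (2 * σ ^ 2 * A β + 1))
      atTop (nhds (Real.log (2 * σ ^ 2 * a + 1) + a * v ^ 2 / (2 * σ ^ 2 * a + 1))) := by
    have hA1 : Tendsto (fun β => 2 * σ ^ 2 * A β + 1) atTop (nhds (2 * σ ^ 2 * a + 1)) :=
      (hAlim.const_mul _).add_const 1
    exact (hA1.log (ne_of_gt hua)).add ((hAlim.mul_const _).div hA1 (ne_of_gt hua))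
  have h2 : Tendsto k atTop (nhds 0) := by
    have hinv : Tendsto (fun β : ℝ => β⁻¹) atTop (nhds 0) := tendsto_inv_atTop_zero
    have t1 : Tendsto (fun β => (2 * σup ^ 2 / β) *
        (Real.log (2 * σ ^ 2 * A β + 1) + A β * v ^ 2 / (2 * σ ^ 2 * A β + 1))) atTop (nhds 0) := by
      have h := (hinv.const_mul (2 * σup ^ 2)).mul hbracket
      simp only [mul_zero, zero_mul] at h
      refine h.congr fun β => ?_
      ring
    have t2 : Tendsto (fun β : ℝ => Real.log (1 + β) / β) atTop (nhds 0) := by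
      have h1 : Tendsto (fun β : ℝ => 1 + β) atTop atTop :=
        tendsto_atTop_add_const_left _ 1 tendsto_id
      have h := (Real.tendsto_pow_log_div_mul_add_atTop 1 (-1) 1 one_ne_zero).comp h1
      refine h.congr fun β => ?_
      simp
    have htot := t1.add (t2.const_mul (σlow ^ 2))
    simp only [mul_zero, add_zero, zero_add] at htot
    refine htot.congr fun β => ?_
    rw [hk β]
    ring
  refine ⟨h1, h2, fun hgt => ?_⟩
  have hev : ∀ᶠ β in nhdsWithin 0 (Ioi 0), σup ^ 2 < k β :=
    h1.eventually (eventually_gt_nhds hgt)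
  obtain ⟨β, hβk, hβpos⟩ := (hev.and eventually_mem_nhdsWithin).exists
  refine ⟨β, hβpos, hβk, ?_⟩
  have hkpos : 0 < k β := lt_trans hσup2 hβk
  have ht1 : 1 < k β / σup ^ 2 := (one_lt_div hσup2).mpr hβk
  have hlt : Real.log (k β / σup ^ 2) < k β / σup ^ 2 - 1 :=
    Real.log_lt_sub_one_of_pos (by positivity) (ne_of_gt ht1)
  have hlogeq : Real.log (σup ^ 2 / k β) = - Real.log (k β / σup ^ 2) := by
    rw [← Real.log_inv, inv_div]
  rw [hlogeq]
  have he : k β / (2 * σup ^ 2) = (k β / σup ^ 2) / 2 := by ring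
  rw [he]
  linarith
end

section
/- (Example 4.4, Nakagami fading: limits of k_β and existence of a valid β.) Let 0 < σ̲ ≤ σ̄, m ≥ 1/2, Ω > 0, σ̲_X > 0, and for β > 0 define k_β := (2σ̄²m/β)·ln( (β(2mσ̄² + Ωσ̲_X²) + 2mσ̄²)/(2mσ̄²β + 2mσ̄²) ) + (σ̲²/β)·ln(1+β). Then k_β → Ωσ̲_X² + σ̲² as β → 0⁺ and k_β → 0 as β → ∞. Moreover, if Ωσ̲_X² + σ̲² > σ̄², then there exists β > 0 such that k_β > σ̄² and 1/2 − (1/2)·ln(σ̄²/k_β) − k_β/(2σ̄²) < 0. -/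
open Real Filter Set

/-- Example 4.4 (Nakagami fading): with
`k_β = (2σ̄²m/β)·ln((β(2mσ̄²+Ωσ̲_X²)+2mσ̄²)/(2mσ̄²β+2mσ̄²)) + (σ̲²/β)·ln(1+β)`,
one has `k_β → Ωσ̲_X² + σ̲²` as `β → 0⁺`, `k_β → 0` as `β → ∞`, and if
`Ωσ̲_X² + σ̲² > σ̄²` then some `β > 0` satisfies `k_β > σ̄²` and
`1/2 − (1/2)·ln(σ̄²/k_β) − k_β/(2σ̄²) < 0`. -/
theorem nakagami_fading_kbeta
    (σlow σup m Om σX : ℝ) (hσlow : 0 < σlow) (hσle : σlow ≤ σup)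
    (hm : 1 / 2 ≤ m) (hOm : 0 < Om) (hσX : 0 < σX)
    (k : ℝ → ℝ)
    (hk : ∀ β, k β = (2 * σup ^ 2 * m / β)
        * Real.log ((β * (2 * m * σup ^ 2 + Om * σX ^ 2) + 2 * m * σup ^ 2)
            / (2 * m * σup ^ 2 * β + 2 * m * σup ^ 2))
      + (σlow ^ 2 / β) * Real.log (1 + β)) :
    Tendsto k (nhdsWithin 0 (Ioi 0)) (nhds (Om * σX ^ 2 + σlow ^ 2)) ∧
    Tendsto k atTop (nhds 0) ∧
    (σup ^ 2 < Om * σX ^ 2 + σlow ^ 2 →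
      ∃ β : ℝ, 0 < β ∧ σup ^ 2 < k β ∧
        1 / 2 - (1 / 2) * Real.log (σup ^ 2 / k β) - k β / (2 * σup ^ 2) < 0) := by
  have hσup : 0 < σup := lt_of_lt_of_le hσlow hσle
  have hm0 : 0 < m := lt_of_lt_of_le (by norm_num) hm
  set a : ℝ := 2 * m * σup ^ 2 with ha_def
  set c : ℝ := Om * σX ^ 2 with hc_def
  have ha : 0 < a := by positivity
  have hc : 0 < c := by positivity
  have ha' : 2 * σup ^ 2 * m = a := by rw [ha_def]; ring
  set G : ℝ → ℝ := fun β => a * (Real.log (β * (a + c) + a) - Real.log (a * β + a))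
      + σlow ^ 2 * Real.log (1 + β) with hG_def
  have hG0 : G 0 = 0 := by simp [hG_def]
  have hGderiv : HasDerivAt G (c + σlow ^ 2) 0 := by
    have h1 : HasDerivAt (fun β : ℝ => β * (a + c) + a) (a + c) 0 :=
      ((hasDerivAt_id 0).mul_const (a + c)).add_const a |>.congr_deriv (by ring)
    have h2 : HasDerivAt (fun β : ℝ => a * β + a) a 0 :=
      ((hasDerivAt_id 0).const_mul a).add_const a |>.congr_deriv (by ring)
    have h3 : HasDerivAt (fun β : ℝ => 1 + β) 1 0 :=
      (hasDerivAt_id 0).const_add 1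
    have hl1 : HasDerivAt (fun β : ℝ => Real.log (β * (a + c) + a)) ((a + c) / a) 0 := by
      have := h1.log (by simp; positivity)
      simpa using this
    have hl2 : HasDerivAt (fun β : ℝ => Real.log (a * β + a)) (a / a) 0 := by
      have := h2.log (by simp; positivity)
      simpa using this
    have hl3 : HasDerivAt (fun β : ℝ => Real.log (1 + β)) 1 0 := by
      have := h3.log (by norm_num)
      simpa using this
    have := ((hl1.sub hl2).const_mul a).add (hl3.const_mul (σlow ^ 2))
    refine this.congr_deriv ?_
    field_simp
    ring
  have hkG : ∀ β ∈ Ioi (0:ℝ), k β = (G β - G 0) / (β - 0) := by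
    intro β hβ
    have hβ0 : (0:ℝ) < β := hβ
    have hnum : 0 < β * (a + c) + a := by positivity
    have hden : 0 < a * β + a := by positivity
    rw [hk, hG0, hG_def]
    simp only
    rw [Real.log_div (ne_of_gt hnum) (ne_of_gt hden), ha']
    field_simp
    rw [sub_zero, sub_zero, mul_div_cancel_left₀ _ hβ0.ne']
  have part1 : Tendsto k (nhdsWithin 0 (Ioi 0)) (nhds (c + σlow ^ 2)) := by
    have hslope := hasDerivAt_iff_tendsto_slope.mp hGderiv
    have hmono : nhdsWithin (0:ℝ) (Ioi 0) ≤ nhdsWithin 0 {0}ᶜ :=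
      nhdsWithin_mono 0 (fun x hx => ne_of_gt hx)
    have hT := hslope.mono_left hmono
    refine Tendsto.congr' ?_ hT
    filter_upwards [self_mem_nhdsWithin] with β hβ
    rw [slope_def_field]
    exact (hkG β hβ).symm
  refine ⟨part1, ?_, ?_⟩
  · -- limit at ∞
    have hterm2 : Tendsto (fun β : ℝ => (σlow ^ 2 / β) * Real.log (1 + β)) atTop (nhds 0) := by
      have hbase : Tendsto (fun x : ℝ => Real.log x ^ 1 / (1 * x + (-1))) atTop (nhds 0) :=
        Real.tendsto_pow_log_div_mul_add_atTop 1 (-1) 1 one_ne_zero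
      have hcomp : Tendsto (fun β : ℝ => Real.log (1 + β) / β) atTop (nhds 0) := by
        have := hbase.comp (tendsto_atTop_add_const_left atTop 1 tendsto_id)
        refine this.congr' ?_
        filter_upwards [eventually_gt_atTop (0:ℝ)] with β hβ
        simp [Function.comp]
      have h2 := hcomp.const_mul (σlow ^ 2)
      rw [mul_zero] at h2
      refine h2.congr (fun β => by ring)
    have hub : Tendsto (fun β : ℝ => (a * Real.log (1 + c / a)) / β) atTop (nhds 0) :=
      tendsto_const_nhds.div_atTop tendsto_id
    have hterm1 : Tendsto (fun β : ℝ => (a / β)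
        * Real.log ((β * (a + c) + a) / (a * β + a))) atTop (nhds 0) := by
      refine tendsto_of_tendsto_of_tendsto_of_le_of_le' tendsto_const_nhds hub ?_ ?_
      · filter_upwards [eventually_gt_atTop (0:ℝ)] with β hβ
        have hden : 0 < a * β + a := by positivity
        have hratio : 1 ≤ (β * (a + c) + a) / (a * β + a) := by
          rw [le_div_iff₀ hden]; nlinarith
        have := Real.log_nonneg hratio
        positivity
      · filter_upwards [eventually_gt_atTop (0:ℝ)] with β hβ
        have hden : 0 < a * β + a := by positivity
        have hnum : 0 < β * (a + c) + a := by positivity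
        have hle : (β * (a + c) + a) / (a * β + a) ≤ 1 + c / a := by
          rw [div_le_iff₀ hden]
          have : (1 + c / a) * (a * β + a) = a * β + a + c * β + c := by
            field_simp; ring
          rw [this]; nlinarith
        have hlog := Real.log_le_log (by positivity) hle
        have h1 : 0 ≤ a / β := by positivity
        calc a / β * Real.log ((β * (a + c) + a) / (a * β + a))
            ≤ a / β * Real.log (1 + c / a) := by
              exact mul_le_mul_of_nonneg_left hlog h1
          _ = a * Real.log (1 + c / a) / β := by ring
    have := hterm1.add hterm2
    rw [add_zero] at this
    refine this.congr (fun β => ?_)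
    rw [hk, ha']
  · -- existence
    intro hlt
    have hev : ∀ᶠ β in nhdsWithin (0:ℝ) (Ioi 0), σup ^ 2 < k β :=
      part1.eventually (eventually_gt_nhds hlt)
    obtain ⟨β, hkβ, hβ⟩ := (hev.and self_mem_nhdsWithin).exists
    refine ⟨β, hβ, hkβ, ?_⟩
    set K := k β with hK
    have hK0 : 0 < K := lt_trans (by positivity) hkβ
    have ht1 : K / σup ^ 2 ≠ 1 := by
      have : σup ^ 2 ≠ K := ne_of_lt hkβ
      intro h
      apply this
      field_simp at h
      linarith
    have hlog : Real.log (K / σup ^ 2) < K / σup ^ 2 - 1 :=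
      Real.log_lt_sub_one_of_pos (by positivity) ht1
    have hloginv : Real.log (σup ^ 2 / K) = - Real.log (K / σup ^ 2) := by
      rw [← Real.log_inv]
      congr 1
      field_simp
    rw [hloginv]
    have hdivs : K / (2 * σup ^ 2) = (K / σup ^ 2) / 2 := by ring
    rw [hdivs]
    nlinarith [hlog]
end

section
/- (Exponential decay of the false-alarm probability.) Let 0 < σ̄, k > σ̄² and d ∈ ℝ. For each n ≥ 1, let (Ωₙ, Fₙ, Pₙ) be a probability space carrying independent real random variables Z₁, …, Zₙ with Zᵢ ~ N(0,σᵢ²) and 0 < σᵢ ≤ σ̄, and set λₙ := k·n + d. Then there exist constants C > 0 and γ > 0 (depending only on k, d, σ̄) such that for all sufficiently large n, Pₙ( Σᵢ₌₁ⁿ Zᵢ² ≥ λₙ ) ≤ C·exp(−γn); in particular Pₙ( Σᵢ₌₁ⁿ Zᵢ² ≥ λₙ ) → 0 as n → ∞. -/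
open MeasureTheory ProbabilityTheory Real Filter Finset

universe u

open scoped ENNReal NNReal

universe v

lemma pdf_mul_exp (s t x : ℝ) (hs : 0 < s) :
    gaussianPDFReal 0 ⟨s^2, sq_nonneg s⟩ x * Real.exp (t * x ^ 2)
      = (Real.sqrt (2 * π * s^2))⁻¹ * Real.exp (-(1/(2*s^2) - t) * x ^ 2) := by
  unfold gaussianPDFReal
  show (√(2 * π * s^2))⁻¹ * rexp (-(x - 0) ^ 2 / (2 * s^2)) * rexp (t * x ^ 2) = _
  push_cast
  rw [mul_assoc, ← Real.exp_add]
  congr 2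
  have h2 : (s:ℝ)^2 ≠ 0 := by positivity
  field_simp
  ring

lemma integrable_pdf_mul_exp (s t : ℝ) (hs : 0 < s) (ht2 : 2 * t * s ^ 2 < 1) :
    Integrable (fun x => gaussianPDFReal 0 ⟨s^2, sq_nonneg s⟩ x * Real.exp (t * x ^ 2)) := by
  have hb : 0 < 1/(2*s^2) - t := by
    rw [sub_pos, lt_div_iff₀ (by positivity)]
    linarith [ht2]
  simp_rw [fun x => pdf_mul_exp s t x hs]
  exact (integrable_exp_neg_mul_sq hb).const_mul _

lemma integral_pdf_mul_exp (s t : ℝ) (hs : 0 < s) (ht2 : 2 * t * s ^ 2 < 1) :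
    ∫ x, gaussianPDFReal 0 ⟨s^2, sq_nonneg s⟩ x * Real.exp (t * x ^ 2)
      = (Real.sqrt (1 - 2*t*s^2))⁻¹ := by
  have hb : 0 < 1/(2*s^2) - t := by
    rw [sub_pos, lt_div_iff₀ (by positivity)]
    linarith [ht2]
  simp_rw [fun x => pdf_mul_exp s t x hs]
  rw [integral_const_mul, integral_gaussian]
  have h1 : 0 < 1 - 2*t*s^2 := by linarith
  rw [← Real.sqrt_inv, ← Real.sqrt_inv, ← Real.sqrt_mul (by positivity)]
  congr 1
  have hπ : (0:ℝ) < π := Real.pi_pos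
  refine eq_inv_of_mul_eq_one_right ?_
  have h2 : (2 * π * s^2) ≠ 0 := by positivity
  have hc : (0:ℝ) < -(t * s ^ 4 * π * 4) + s ^ 2 * π * 2 := by
    nlinarith [mul_pos (mul_pos hπ (pow_pos hs 2)) h1]
  have hc' := hc.ne'
  field_simp

lemma mgf_sq_gaussian {Ω : Type u} [MeasurableSpace Ω] {μ : Measure Ω} [IsProbabilityMeasure μ]
    {Z : Ω → ℝ} (hm : Measurable Z) {s t : ℝ} (hs : 0 < s) (ht2 : 2 * t * s ^ 2 < 1)
    (hZ : Measure.map Z μ = gaussianReal 0 ⟨s ^ 2, sq_nonneg s⟩) :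
    Integrable (fun ω => rexp (t * (Z ω) ^ 2)) μ ∧
      mgf (fun ω => (Z ω) ^ 2) μ t = (Real.sqrt (1 - 2 * t * s ^ 2))⁻¹ := by
  have hv : (⟨s ^ 2, sq_nonneg s⟩ : NNReal) ≠ 0 := by
    intro h
    exact (pow_pos hs 2).ne' (congrArg Subtype.val h)
  have hmeasg : Measurable fun x : ℝ => rexp (t * x ^ 2) :=
    ((measurable_id.pow_const 2).const_mul t).exp
  have hg : gaussianReal 0 ⟨s ^ 2, sq_nonneg s⟩
      = volume.withDensity
        (fun x => ((gaussianPDFReal 0 ⟨s ^ 2, sq_nonneg s⟩ x).toNNReal : ℝ≥0∞)) := by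
    rw [gaussianReal_of_var_ne_zero 0 hv]; rfl
  have hInt2 : Integrable (fun x : ℝ => rexp (t * x ^ 2)) (gaussianReal 0 ⟨s ^ 2, sq_nonneg s⟩) := by
    erw [hg, integrable_withDensity_iff_integrable_smul
      ((measurable_gaussianPDFReal _ _).real_toNNReal)]
    refine (integrable_congr (Eventually.of_forall fun x => ?_)).mp
      (integrable_pdf_mul_exp s t hs ht2)
    simp [NNReal.smul_def, Real.coe_toNNReal _ (gaussianPDFReal_nonneg _ _ x), gaussianPDFReal_nonneg]
    exact gaussianPDFReal_nonneg _ _ x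
  have hIntZ : Integrable (fun ω => rexp (t * (Z ω) ^ 2)) μ := by
    have h := (integrable_map_measure hmeasg.aestronglyMeasurable hm.aemeasurable).mp
      (hZ ▸ hInt2)
    exact h
  refine ⟨hIntZ, ?_⟩
  have : mgf (fun ω => (Z ω) ^ 2) μ t = ∫ ω, rexp (t * (Z ω) ^ 2) ∂μ := rfl
  erw [this, ← integral_map hm.aemeasurable hmeasg.aestronglyMeasurable, hZ, hg,
    integral_withDensity_eq_integral_smul ((measurable_gaussianPDFReal _ _).real_toNNReal),
    ← integral_pdf_mul_exp s t hs ht2]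
  congr 1 with x
  simp [NNReal.smul_def, Real.coe_toNNReal _ (gaussianPDFReal_nonneg _ _ x), gaussianPDFReal_nonneg]
  exact gaussianPDFReal_nonneg _ _ x

lemma chernoff_bound {Ω : Type u} [MeasurableSpace Ω] (Q : Measure Ω) [IsProbabilityMeasure Q]
    {n : ℕ} (W : Fin n → Ω → ℝ) (hW : ∀ i, Measurable (W i))
    (hind : iIndepFun W Q)
    (τ : Fin n → ℝ) (hτpos : ∀ i, 0 < τ i)
    (hWd : ∀ i, Measure.map (W i) Q = gaussianReal 0 ⟨(τ i) ^ 2, sq_nonneg (τ i)⟩)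
    (t : ℝ) (ht : 0 ≤ t) (ht2 : ∀ i, 2 * t * (τ i) ^ 2 < 1) (lam : ℝ) :
    (Q {ω | lam ≤ ∑ i, (W i ω) ^ 2}).toReal
      ≤ Real.exp (-t * lam) * ∏ i, (Real.sqrt (1 - 2 * t * (τ i) ^ 2))⁻¹ := by
  set X : Fin n → Ω → ℝ := fun i ω => (W i ω) ^ 2 with hX
  have hXm : ∀ i, Measurable (X i) := fun i => (hW i).pow_const 2
  have hXind : iIndepFun X Q :=
    hind.comp (fun _ x => x ^ 2) (fun _ => measurable_id.pow_const 2)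
  have hint : ∀ i ∈ Finset.univ, Integrable (fun ω => rexp (t * X i ω)) Q := fun i _ =>
    (mgf_sq_gaussian (hW i) (hτpos i) (ht2 i) (hWd i)).1
  have hset : {ω | lam ≤ ∑ i, (W i ω) ^ 2} = {ω | lam ≤ (∑ i, X i) ω} := by
    ext ω; simp [hX]
  rw [hset]
  refine (measure_ge_le_exp_mul_mgf lam ht
    (hXind.integrable_exp_mul_sum hXm hint)).trans ?_
  rw [hXind.mgf_sum hXm]
  refine mul_le_mul_of_nonneg_left (Finset.prod_le_prod (fun i _ => mgf_nonneg)
    (fun i _ => le_of_eq (mgf_sq_gaussian (hW i) (hτpos i) (ht2 i) (hWd i)).2))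
    (Real.exp_pos _).le

/-- Exponential decay of the false-alarm probability: for `k > σ̄² > 0`, `d ∈ ℝ`, and
thresholds `λₙ = kn + d`, there are `C > 0`, `γ > 0` (depending only on `k, d, σ̄`) such
that for all sufficiently large `n`, on any probability space carrying independent
`Z₁,…,Zₙ` with `Zᵢ ~ N(0,σᵢ²)`, `0 < σᵢ ≤ σ̄`, one has
`P(Σ Zᵢ² ≥ λₙ) ≤ C·exp(−γn)`; in particular this probability tends to `0`. -/
theorem false_alarm_exponential_decay
    (σup k d : ℝ) (hσup : 0 < σup) (hk : σup ^ 2 < k)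
    -- a given family of probability spaces and random variables, one for each `n`
    (Ωf : ℕ → Type u) (ms : ∀ n, MeasurableSpace (Ωf n))
    (P : ∀ n, Measure (Ωf n)) (hPprob : ∀ n, IsProbabilityMeasure (P n))
    (Z : ∀ n, Fin n → Ωf n → ℝ) (hZmeas : ∀ n i, Measurable (Z n i))
    (hindep : ∀ n, iIndepFun (Z n) (P n))
    (σ : ∀ n, Fin n → ℝ) (hσ : ∀ n i, 0 < σ n i ∧ σ n i ≤ σup)
    (hZ : ∀ n i, Measure.map (Z n i) (P n)
      = gaussianReal 0 ⟨(σ n i) ^ 2, sq_nonneg (σ n i)⟩) :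
    (∃ C > (0 : ℝ), ∃ γ > (0 : ℝ), ∃ N : ℕ, ∀ n, N ≤ n →
      -- the constants work uniformly over all admissible probability spaces
      ∀ (Ωn : Type u) (_ : MeasurableSpace Ωn) (Q : Measure Ωn),
        IsProbabilityMeasure Q →
        ∀ (W : Fin n → Ωn → ℝ), (∀ i, Measurable (W i)) →
          iIndepFun W Q →
          ∀ (τ : Fin n → ℝ), (∀ i, 0 < τ i ∧ τ i ≤ σup) →
            (∀ i, Measure.map (W i) Q = gaussianReal 0 ⟨(τ i) ^ 2, sq_nonneg (τ i)⟩) →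
            (Q {ω | k * n + d ≤ ∑ i, (W i ω) ^ 2}).toReal ≤ C * Real.exp (-γ * n)) ∧
    Tendsto (fun n => ((P n) {ω | k * n + d ≤ ∑ i, (Z n i ω) ^ 2}).toReal)
      atTop (nhds 0) := by
  set v : ℝ := σup ^ 2 with hvdef
  have hv : 0 < v := by positivity
  have hkpos : 0 < k := hv.trans hk
  set t : ℝ := (k - v) / (2 * k * v) with htdef
  have ht : 0 < t := by
    apply div_pos (by linarith) (by positivity)
  set L : ℝ := Real.log (k / v) with hLdef
  set γ : ℝ := t * k - L / 2 with hγdef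
  set C : ℝ := Real.exp (-t * d) with hCdef
  have h2tv : 1 - 2 * t * v = v / k := by
    rw [htdef]; field_simp; ring
  have hvk : 0 < v / k := div_pos hv hkpos
  have htk : t * k = (k / v - 1) / 2 := by
    rw [htdef]; field_simp
  have hL : L < k / v - 1 := by
    rw [hLdef]
    exact Real.log_lt_sub_one_of_pos (div_pos hkpos hv)
      (ne_of_gt ((one_lt_div hv).mpr hk))
  have hγ : 0 < γ := by rw [hγdef, htk]; linarith
  have hC : 0 < C := Real.exp_pos _
  -- the uniform bound
  have hmain : ∀ (n : ℕ) (Ωn : Type u) (msn : MeasurableSpace Ωn) (Q : Measure Ωn),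
      IsProbabilityMeasure Q →
      ∀ (W : Fin n → Ωn → ℝ), (∀ i, Measurable (W i)) →
        iIndepFun W Q →
        ∀ (τ : Fin n → ℝ), (∀ i, 0 < τ i ∧ τ i ≤ σup) →
          (∀ i, Measure.map (W i) Q = gaussianReal 0 ⟨(τ i) ^ 2, sq_nonneg (τ i)⟩) →
          (Q {ω | k * n + d ≤ ∑ i, (W i ω) ^ 2}).toReal ≤ C * Real.exp (-γ * n) := by
    intro n Ωn msn Q hQ W hWm hWind τ hτ hWd
    have hτ2 : ∀ i, (τ i) ^ 2 ≤ v := fun i =>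
      pow_le_pow_left₀ (hτ i).1.le (hτ i).2 2
    have ht2 : ∀ i, 2 * t * (τ i) ^ 2 < 1 := by
      intro i
      have h1 : 2 * t * (τ i) ^ 2 ≤ 2 * t * v := by
        have := hτ2 i; nlinarith
      have h2 : 2 * t * v < 1 := by
        have : 1 - 2 * t * v = v / k := h2tv
        linarith [hvk]
      linarith
    refine (chernoff_bound Q W hWm hWind τ (fun i => (hτ i).1) hWd t ht.le ht2 _).trans ?_
    have hfac : ∀ i : Fin n, (Real.sqrt (1 - 2 * t * (τ i) ^ 2))⁻¹
        ≤ (Real.sqrt (v / k))⁻¹ := by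
      intro i
      have hge : v / k ≤ 1 - 2 * t * (τ i) ^ 2 := by
        rw [← h2tv]
        have := hτ2 i; nlinarith
      exact inv_anti₀ (Real.sqrt_pos.mpr hvk) (Real.sqrt_le_sqrt hge)
    have hprod : ∏ i : Fin n, (Real.sqrt (1 - 2 * t * (τ i) ^ 2))⁻¹
        ≤ ((Real.sqrt (v / k))⁻¹) ^ n := by
      calc ∏ i : Fin n, (Real.sqrt (1 - 2 * t * (τ i) ^ 2))⁻¹
          ≤ ∏ _i : Fin n, (Real.sqrt (v / k))⁻¹ :=
            Finset.prod_le_prod (fun i _ => by positivity) (fun i _ => hfac i)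
        _ = ((Real.sqrt (v / k))⁻¹) ^ n := by
            rw [Finset.prod_const, Finset.card_univ, Fintype.card_fin]
    have hpowpos : (0:ℝ) < (Real.sqrt (v / k))⁻¹ := by
      positivity
    calc Real.exp (-t * (k * n + d)) * ∏ i : Fin n, (Real.sqrt (1 - 2 * t * (τ i) ^ 2))⁻¹
        ≤ Real.exp (-t * (k * n + d)) * ((Real.sqrt (v / k))⁻¹) ^ n :=
          mul_le_mul_of_nonneg_left hprod (Real.exp_pos _).le
      _ = C * Real.exp (-γ * n) := by
          have hsq : (Real.sqrt (v / k))⁻¹ = Real.exp (L / 2) := by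
            rw [← Real.exp_log hpowpos]
            congr 1
            rw [Real.log_inv, Real.log_sqrt hvk.le, hLdef,
              show k / v = (v / k)⁻¹ by rw [inv_div], Real.log_inv]
            ring
          rw [hsq, ← Real.exp_nat_mul, hCdef, ← Real.exp_add, ← Real.exp_add]
          congr 1
          rw [hγdef]
          ring
  refine ⟨⟨C, hC, γ, hγ, 0, fun n _ => hmain n⟩, ?_⟩
  have hb : ∀ n : ℕ, ((P n) {ω | k * n + d ≤ ∑ i, (Z n i ω) ^ 2}).toReal
      ≤ C * Real.exp (-γ * n) := fun n =>
    hmain n (Ωf n) (ms n) (P n) (hPprob n) (Z n) (hZmeas n) (hindep n) (σ n) (hσ n) (hZ n)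
  have h0 : Tendsto (fun n : ℕ => C * Real.exp (-γ * n)) atTop (nhds 0) := by
    have hlt1 : Real.exp (-γ) < 1 := by
      rw [← Real.exp_zero]
      exact Real.exp_lt_exp.mpr (by linarith)
    have h := (tendsto_pow_atTop_nhds_zero_of_lt_one (Real.exp_nonneg _) hlt1).const_mul C
    rw [show (fun n : ℕ => C * Real.exp (-γ * n)) = fun n : ℕ => C * Real.exp (-γ) ^ n from
      funext fun n => by rw [← Real.exp_nat_mul, mul_comm (n : ℝ) (-γ)]]
    simpa using h
  exact squeeze_zero (fun n => ENNReal.toReal_nonneg) hb h0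
end

section
/- (Single-observation estimate in the proof of Theorem 4.1, classical instantiation.) Let (Ω, F, P) be a probability space carrying jointly independent real random variables X, ε, Z such that Z ~ N(0,σ²) with 0 < σ̲ ≤ σ ≤ σ̄, ε ≥ 0 almost surely, and |X| ≥ σ̲_X almost surely for a constant σ̲_X > 0. Then for every β > 0, E[ exp(−β(εX + Z)²/(2σ̄²)) ] ≤ (1+β)^{−ρ} · E[ exp(−βε²σ̲_X²/(2σ̄²(1+β))) ], where ρ := σ̲²/(2σ̄²). -/
open MeasureTheory ProbabilityTheory Real
open scoped NNReal ENNReal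

lemma gauss_translate {k : ℝ} (hk : 0 < k) (m : ℝ) :
    ∫ z : ℝ, rexp (-(k * (z + m) ^ 2)) = Real.sqrt (π / k) := by
  have h := MeasureTheory.integral_add_right_eq_self (μ := volume) (fun z : ℝ => rexp (-(k * z ^ 2))) m
  rw [h]
  simpa [neg_mul] using integral_gaussian k

lemma gauss_quadratic {c s : ℝ} (hc : 0 < c) (hs : 0 < s) (a : ℝ) :
    ∫ z : ℝ, rexp (-(c * (a + z) ^ 2) - z ^ 2 / (2 * s))
      = Real.sqrt (π / (c + 1 / (2 * s))) * rexp (-(c * a ^ 2) / (1 + 2 * c * s)) := by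
  set k : ℝ := c + 1 / (2 * s) with hk_def
  have hk : 0 < k := by positivity
  have hden : (0:ℝ) < 1 + 2 * c * s := by positivity
  have hexp : ∀ z : ℝ, -(c * (a + z) ^ 2) - z ^ 2 / (2 * s)
      = -(c * a ^ 2) / (1 + 2 * c * s) + -(k * (z + c * a / k) ^ 2) := by
    intro z
    rw [hk_def]
    field_simp
    ring
  have : (fun z : ℝ => rexp (-(c * (a + z) ^ 2) - z ^ 2 / (2 * s)))
      = fun z : ℝ => rexp (-(c * a ^ 2) / (1 + 2 * c * s)) * rexp (-(k * (z + c * a / k) ^ 2)) := by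
    funext z
    rw [← Real.exp_add, ← hexp z]
  rw [this, MeasureTheory.integral_const_mul, gauss_translate hk, mul_comm]

lemma gauss_measure_integral {c : ℝ} (hc : 0 < c) {v : ℝ≥0} (hv : 0 < (v : ℝ)) (a : ℝ) :
    ∫ z, rexp (-(c * (a + z) ^ 2)) ∂(gaussianReal 0 v)
      = (1 + 2 * c * v) ^ (-(1/2) : ℝ) * rexp (-(c * a ^ 2) / (1 + 2 * c * v)) := by
  have hv0 : v ≠ 0 := by
    intro h; rw [h] at hv; simp at hv
  rw [gaussianReal_of_var_ne_zero 0 hv0, gaussianPDF_def]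
  have hrw : (fun x => ENNReal.ofReal (gaussianPDFReal 0 v x))
      = fun x => ((gaussianPDFReal 0 v x).toNNReal : ℝ≥0∞) := rfl
  rw [hrw, integral_withDensity_eq_integral_smul ((measurable_gaussianPDFReal 0 v).real_toNNReal)]
  have h1 : ∀ z : ℝ, (gaussianPDFReal 0 v z).toNNReal • rexp (-(c * (a + z) ^ 2))
      = (Real.sqrt (2 * π * v))⁻¹ * rexp (-(c * (a + z) ^ 2) - z ^ 2 / (2 * v)) := by
    intro z
    rw [NNReal.smul_def, smul_eq_mul, Real.coe_toNNReal _ (gaussianPDFReal_nonneg 0 v z),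
      gaussianPDFReal]
    rw [mul_assoc, ← Real.exp_add]
    ring_nf
  simp_rw [h1]
  rw [MeasureTheory.integral_const_mul, gauss_quadratic hc hv a, ← mul_assoc]
  congr 1
  have hπ : (0:ℝ) < π := pi_pos
  have hk : (0:ℝ) < c + 1 / (2 * v) := by positivity
  have hK : (0:ℝ) < 1 + 2 * c * v := by positivity
  rw [← Real.sqrt_inv, ← Real.sqrt_mul (by positivity)]
  have : (2 * π * (v:ℝ))⁻¹ * (π / (c + 1 / (2 * v))) = (1 + 2 * c * v)⁻¹ := by
    field_simp
    ring
  rw [this, Real.rpow_neg hK.le, ← Real.sqrt_eq_rpow, Real.sqrt_inv]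


/-- Single-observation estimate in the proof of Theorem 4.1 (classical instantiation):
for jointly independent `X, ε, Z` with `Z ~ N(0,σ²)`, `0 < σ̲ ≤ σ ≤ σ̄`, `ε ≥ 0` a.s.
and `|X| ≥ σ̲_X > 0` a.s., for every `β > 0`,
`E[exp(−β(εX+Z)²/(2σ̄²))] ≤ (1+β)^{−ρ}·E[exp(−βε²σ̲_X²/(2σ̄²(1+β)))]`,
where `ρ = σ̲²/(2σ̄²)`. -/
theorem single_observation_estimate
    {Ω : Type*} [MeasurableSpace Ω] (P : Measure Ω) [IsProbabilityMeasure P]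
    (X ε Z : Ω → ℝ)
    (hXmeas : Measurable X) (hεmeas : Measurable ε) (hZmeas : Measurable Z)
    (hindep : iIndepFun ![X, ε, Z] P)
    (σlow σ σup : ℝ) (h1 : 0 < σlow) (h2 : σlow ≤ σ) (h3 : σ ≤ σup)
    (hZ : Measure.map Z P = gaussianReal 0 ⟨σ ^ 2, sq_nonneg σ⟩)
    (hεpos : ∀ᵐ ω ∂P, 0 ≤ ε ω)
    (σX : ℝ) (hσX : 0 < σX) (hX : ∀ᵐ ω ∂P, σX ≤ |X ω|)
    (β : ℝ) (hβ : 0 < β) :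
    ∫ ω, Real.exp (-(β * (ε ω * X ω + Z ω) ^ 2) / (2 * σup ^ 2)) ∂P
      ≤ (1 + β) ^ (-(σlow ^ 2 / (2 * σup ^ 2)))
        * ∫ ω, Real.exp (-(β * (ε ω) ^ 2 * σX ^ 2) / (2 * σup ^ 2 * (1 + β))) ∂P := by
  have hσup : 0 < σup := h1.trans_le (h2.trans h3)
  have hσ : 0 < σ := h1.trans_le h2
  set c : ℝ := β / (2 * σup ^ 2) with hc_def
  have hc : 0 < c := by positivity
  set v : ℝ≥0 := ⟨σ ^ 2, sq_nonneg σ⟩ with hv_def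
  have hvc : (v : ℝ) = σ ^ 2 := rfl
  have hv : 0 < (v : ℝ) := by rw [hvc]; positivity
  set K : ℝ := 1 + 2 * c * σ ^ 2 with hK_def
  have hK0 : 0 < K := by positivity
  have hcσ : 2 * c * σ ^ 2 = σ ^ 2 / σup ^ 2 * β := by
    rw [hc_def]; field_simp
  have hKβ : K ≤ 1 + β := by
    rw [hK_def, hcσ]
    have hσσ : σ ^ 2 ≤ σup ^ 2 := by nlinarith
    have : σ ^ 2 / σup ^ 2 ≤ 1 := by
      rw [div_le_one (by positivity)]; exact hσσ
    nlinarith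
  -- independence of (ε, X) and Z
  have hWmeas : Measurable (fun ω => (ε ω, X ω)) := hεmeas.prodMk hXmeas
  have hWZ : IndepFun (fun ω => (ε ω, X ω)) Z P := by
    have h := hindep.indepFun_prodMk
      (fun i => by fin_cases i <;> simpa using ‹_›) 1 0 2 (by decide) (by decide)
    simpa using h
  have hmap : P.map (fun ω => ((ε ω, X ω), Z ω))
      = (P.map (fun ω => (ε ω, X ω))).prod (P.map Z) :=
    (indepFun_iff_map_prod_eq_prod_map_map hWmeas.aemeasurable hZmeas.aemeasurable).mp hWZ
  haveI : IsProbabilityMeasure (P.map (fun ω => (ε ω, X ω))) :=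
    Measure.isProbabilityMeasure_map hWmeas.aemeasurable
  haveI : IsProbabilityMeasure (P.map Z) := by rw [hZ]; infer_instance
  have hFcont : Continuous (fun p : (ℝ × ℝ) × ℝ => rexp (-(c * (p.1.1 * p.1.2 + p.2) ^ 2))) := by
    fun_prop
  have hFint : Integrable (fun p : (ℝ × ℝ) × ℝ => rexp (-(c * (p.1.1 * p.1.2 + p.2) ^ 2)))
      ((P.map (fun ω => (ε ω, X ω))).prod (P.map Z)) := by
    refine (integrable_const (1:ℝ)).mono' hFcont.aestronglyMeasurable ?_
    filter_upwards with p
    rw [Real.norm_eq_abs, abs_of_pos (Real.exp_pos _), Real.exp_le_one_iff]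
    have : 0 ≤ c * (p.1.1 * p.1.2 + p.2) ^ 2 := by positivity
    linarith
  have key : ∫ ω, rexp (-(β * (ε ω * X ω + Z ω) ^ 2) / (2 * σup ^ 2)) ∂P
      = ∫ ω, K ^ (-(1/2) : ℝ) * rexp (-(c * (ε ω * X ω) ^ 2) / K) ∂P := by
    have hexp : ∀ ω, -(β * (ε ω * X ω + Z ω) ^ 2) / (2 * σup ^ 2)
        = -(c * (ε ω * X ω + Z ω) ^ 2) := by
      intro ω; rw [hc_def]; ring
    simp_rw [hexp]
    calc ∫ ω, rexp (-(c * (ε ω * X ω + Z ω) ^ 2)) ∂P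
        = ∫ p : (ℝ × ℝ) × ℝ, rexp (-(c * (p.1.1 * p.1.2 + p.2) ^ 2))
            ∂(P.map (fun ω => ((ε ω, X ω), Z ω))) := by
          rw [integral_map (hWmeas.prodMk hZmeas).aemeasurable hFcont.aestronglyMeasurable]
      _ = ∫ p : (ℝ × ℝ) × ℝ, rexp (-(c * (p.1.1 * p.1.2 + p.2) ^ 2))
            ∂((P.map (fun ω => (ε ω, X ω))).prod (P.map Z)) := by rw [hmap]
      _ = ∫ w : ℝ × ℝ, ∫ z : ℝ, rexp (-(c * (w.1 * w.2 + z) ^ 2)) ∂(P.map Z)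
            ∂(P.map (fun ω => (ε ω, X ω))) := integral_prod _ hFint
      _ = ∫ w : ℝ × ℝ, K ^ (-(1/2) : ℝ) * rexp (-(c * (w.1 * w.2) ^ 2) / K)
            ∂(P.map (fun ω => (ε ω, X ω))) := by
          congr 1; funext w
          rw [hZ, gauss_measure_integral hc hv (w.1 * w.2), hvc]
      _ = ∫ ω, K ^ (-(1/2) : ℝ) * rexp (-(c * (ε ω * X ω) ^ 2) / K) ∂P := by
          rw [integral_map hWmeas.aemeasurable]
          exact (Continuous.aestronglyMeasurable (by fun_prop))
  rw [key]
  have hint1 : Integrable (fun ω => K ^ (-(1/2) : ℝ) * rexp (-(c * (ε ω * X ω) ^ 2) / K)) P := by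
    apply Integrable.const_mul
    refine (integrable_const (1:ℝ)).mono' ?_ ?_
    · exact (Measurable.exp (by fun_prop)).aestronglyMeasurable
    · filter_upwards with ω
      rw [Real.norm_eq_abs, abs_of_pos (Real.exp_pos _), Real.exp_le_one_iff]
      apply div_nonpos_of_nonpos_of_nonneg _ hK0.le
      have : 0 ≤ c * (ε ω * X ω) ^ 2 := by positivity
      linarith
  have hint2 : Integrable (fun ω => (1 + β) ^ (-(σlow ^ 2 / (2 * σup ^ 2)))
      * rexp (-(β * (ε ω) ^ 2 * σX ^ 2) / (2 * σup ^ 2 * (1 + β)))) P := by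
    apply Integrable.const_mul
    refine (integrable_const (1:ℝ)).mono' ?_ ?_
    · exact (Measurable.exp (by fun_prop)).aestronglyMeasurable
    · filter_upwards with ω
      rw [Real.norm_eq_abs, abs_of_pos (Real.exp_pos _), Real.exp_le_one_iff]
      apply div_nonpos_of_nonpos_of_nonneg _ (by positivity)
      have : 0 ≤ β * (ε ω) ^ 2 * σX ^ 2 := by positivity
      linarith
  have hb : ∀ᵐ ω ∂P, K ^ (-(1/2) : ℝ) * rexp (-(c * (ε ω * X ω) ^ 2) / K)
      ≤ (1 + β) ^ (-(σlow ^ 2 / (2 * σup ^ 2)))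
        * rexp (-(β * (ε ω) ^ 2 * σX ^ 2) / (2 * σup ^ 2 * (1 + β))) := by
    filter_upwards [hεpos, hX] with ω hε hXb
    have hβ1 : (0:ℝ) < 1 + β := by linarith
    -- first factor
    have hfac1 : K ^ (-(1/2) : ℝ) ≤ (1 + β) ^ (-(σlow ^ 2 / (2 * σup ^ 2))) := by
      set t : ℝ := σlow ^ 2 / σup ^ 2 with ht_def
      have ht0 : 0 < t := by positivity
      have ht1 : t ≤ 1 := by
        rw [ht_def, div_le_one (by positivity)]; nlinarith
      have hBern : (1 + β) ^ t ≤ 1 + t * β :=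
        rpow_one_add_le_one_add_mul_self (by linarith) ht0.le ht1
      have htK : 1 + t * β ≤ K := by
        rw [hK_def, hcσ, ht_def]
        have : σlow ^ 2 / σup ^ 2 ≤ σ ^ 2 / σup ^ 2 := by
          apply div_le_div_of_nonneg_right ?_ (by positivity)
          · nlinarith
        nlinarith
      have hBpos : 0 < (1 + β) ^ t := rpow_pos_of_pos hβ1 t
      calc K ^ (-(1/2) : ℝ) ≤ ((1 + β) ^ t) ^ (-(1/2) : ℝ) :=
            rpow_le_rpow_of_nonpos hBpos (le_trans hBern htK) (by norm_num)
        _ = (1 + β) ^ (-(σlow ^ 2 / (2 * σup ^ 2))) := by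
            rw [← Real.rpow_mul hβ1.le]
            congr 1
            rw [ht_def]; ring
    -- second factor
    have hfac2 : rexp (-(c * (ε ω * X ω) ^ 2) / K)
        ≤ rexp (-(β * (ε ω) ^ 2 * σX ^ 2) / (2 * σup ^ 2 * (1 + β))) := by
      rw [Real.exp_le_exp]
      have hrw : -(β * (ε ω) ^ 2 * σX ^ 2) / (2 * σup ^ 2 * (1 + β))
          = -(c * (ε ω) ^ 2 * σX ^ 2) / (1 + β) := by
        rw [hc_def]; field_simp
      rw [hrw]
      have hx2 : σX ^ 2 ≤ X ω ^ 2 := by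
        have := pow_le_pow_left₀ hσX.le hXb 2
        rwa [sq_abs] at this
      have haa : c * (ε ω) ^ 2 * σX ^ 2 ≤ c * (ε ω * X ω) ^ 2 := by
        have h' : (ε ω) ^ 2 * σX ^ 2 ≤ (ε ω) ^ 2 * X ω ^ 2 :=
          mul_le_mul_of_nonneg_left hx2 (sq_nonneg _)
        calc c * (ε ω) ^ 2 * σX ^ 2 = c * ((ε ω) ^ 2 * σX ^ 2) := by ring
          _ ≤ c * ((ε ω) ^ 2 * X ω ^ 2) := mul_le_mul_of_nonneg_left h' hc.le
          _ = c * (ε ω * X ω) ^ 2 := by ring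
      rw [neg_div, neg_div, neg_le_neg_iff]
      exact div_le_div₀ (by positivity) haa hK0 hKβ
    exact mul_le_mul hfac1 hfac2 (Real.exp_pos _).le (rpow_nonneg (by linarith) _)
  calc ∫ ω, K ^ (-(1/2) : ℝ) * rexp (-(c * (ε ω * X ω) ^ 2) / K) ∂P
      ≤ ∫ ω, (1 + β) ^ (-(σlow ^ 2 / (2 * σup ^ 2)))
          * rexp (-(β * (ε ω) ^ 2 * σX ^ 2) / (2 * σup ^ 2 * (1 + β))) ∂P :=
        integral_mono_ae hint1 hint2 hb
    _ = (1 + β) ^ (-(σlow ^ 2 / (2 * σup ^ 2)))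
        * ∫ ω, rexp (-(β * (ε ω) ^ 2 * σX ^ 2) / (2 * σup ^ 2 * (1 + β))) ∂P :=
        integral_const_mul _ _
end
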